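/- arXiv:2312.06443 — 7 statements merged into one kernel-verified Lean document; each statement's English description precedes it below -/
import Mathlib

section
/- Every nonempty compact subset U of ℝ^n contains a leximin-optimal element. -/
/-- The vector `x` sorted in nondecreasing order. -/
noncomputable def sortVec {n : ℕ} (x : Fin n → ℝ) : Fin n → ℝ := x ∘ Tuple.sort x

/-- `x` leximin-dominates `y`. -/
def LexDom {n : ℕ} (x y : Fin n → ℝ) : Prop :=
  ∃ k : Fin n, (∀ j : Fin n, j < k → sortVec x j = sortVec y j) ∧ sortVec y k < sortVec x k

lemma sortVec_mono {n : ℕ} (x : Fin n → ℝ) : Monotone (sortVec x) :=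
  Tuple.monotone_sort x

lemma sortVec_le_iff {n : ℕ} (x : Fin n → ℝ) (c : ℝ) (j : Fin n) :
    sortVec x j ≤ c ↔ (j : ℕ) < Fintype.card {i // x i ≤ c} := by
  classical
  have h := (Tuple.lt_card_le_iff_apply_le_of_monotone (f := sortVec x) (a := c) (j := j) (sortVec_mono x)).symm
  rw [h, ← Fintype.card_subtype]
  have : Fintype.card {i // sortVec x i ≤ c} = Fintype.card {i // x i ≤ c} := by
    apply Fintype.card_congr
    exact Equiv.subtypeEquiv (Tuple.sort x) (fun a => Iff.rfl)
  rw [this]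

lemma sortVec_le_add {n : ℕ} (x y : Fin n → ℝ) (ε : ℝ) (h : ∀ i, x i ≤ y i + ε) (j : Fin n) :
    sortVec x j ≤ sortVec y j + ε := by
  classical
  rw [sortVec_le_iff]
  have h1 : (j : ℕ) < Fintype.card {i // y i ≤ sortVec y j} := by
    rw [← sortVec_le_iff]
  refine lt_of_lt_of_le h1 (Fintype.card_le_of_injective
    (fun i => ⟨i.1, (h i.1).trans (by linarith [i.2])⟩) ?_)
  intro a b hab
  simpa [Subtype.ext_iff] using hab

lemma sortVec_continuous {n : ℕ} (j : Fin n) : Continuous (fun x : Fin n → ℝ => sortVec x j) := by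
  apply LipschitzWith.continuous (K := 1)
  intro x y
  rw [ENNReal.coe_one, one_mul, edist_dist, edist_dist]
  apply ENNReal.ofReal_le_ofReal
  rw [Real.dist_eq, abs_sub_le_iff]
  constructor
  · have := sortVec_le_add x y (dist x y) (fun i => by
      have := dist_le_pi_dist x y i
      rw [Real.dist_eq] at this
      have := abs_le.mp this
      linarith [this.1, this.2]) j
    linarith
  · have := sortVec_le_add y x (dist x y) (fun i => by
      have h1 := dist_le_pi_dist x y i
      rw [Real.dist_eq] at h1
      have h2 := abs_le.mp h1
      linarith [h2.1, h2.2]) j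
    linarith

/-- argmax set of a continuous function on a set. -/
def argmaxSet {α : Type*} (f : α → ℝ) (S : Set α) : Set α :=
  {x ∈ S | ∀ y ∈ S, f y ≤ f x}

lemma argmaxSet_compact_nonempty {α : Type*} [TopologicalSpace α] [T2Space α]
    {f : α → ℝ} (hf : Continuous f) {S : Set α}
    (hS : IsCompact S) (hne : S.Nonempty) :
    IsCompact (argmaxSet f S) ∧ (argmaxSet f S).Nonempty ∧ argmaxSet f S ⊆ S := by
  obtain ⟨x, hxS, hx⟩ := hS.exists_isMaxOn hne hf.continuousOn
  refine ⟨?_, ⟨x, hxS, hx⟩, fun y hy => hy.1⟩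
  have : argmaxSet f S = S ∩ ⋂ y ∈ S, {z | f y ≤ f z} := by
    ext z; simp [argmaxSet, Set.mem_iInter]
  rw [this]
  exact hS.inter_right (isClosed_biInter (fun y _ => isClosed_le continuous_const hf))

noncomputable def argSets (n : ℕ) (U : Set (Fin n → ℝ)) : ℕ → Set (Fin n → ℝ)
  | 0 => U
  | (k+1) =>
    if h : k < n then argmaxSet (fun x => sortVec x ⟨k, h⟩) (argSets n U k)
    else argSets n U k

/-- Every nonempty compact subset of ℝ^n contains a leximin-optimal element. -/
theorem exists_leximinOpt_of_compact (n : ℕ) (U : Set (Fin n → ℝ))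
    (hne : U.Nonempty) (hc : IsCompact U) :
    ∃ π ∈ U, ∀ π' ∈ U, ¬ LexDom π' π := by
  -- basic facts about argSets
  have hbasic : ∀ k, IsCompact (argSets n U k) ∧ (argSets n U k).Nonempty ∧
      argSets n U k ⊆ U := by
    intro k
    induction k with
    | zero => exact ⟨hc, hne, subset_rfl⟩
    | succ k ih =>
      obtain ⟨hck, hnk, hsk⟩ := ih
      by_cases h : k < n
      · have := argmaxSet_compact_nonempty (sortVec_continuous ⟨k, h⟩) hck hnk
        simp only [argSets, dif_pos h]
        exact ⟨this.1, this.2.1, this.2.2.trans hsk⟩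
      · simp only [argSets, dif_neg h]
        exact ⟨hck, hnk, hsk⟩
  have hmono : ∀ a b : ℕ, a ≤ b → argSets n U b ⊆ argSets n U a := by
    intro a b hab
    induction b with
    | zero => simp_all
    | succ b ih =>
      rcases Nat.lt_or_ge a (b+1) with h | h
      · have hsub : argSets n U (b+1) ⊆ argSets n U b := by
          by_cases hb : b < n
          · simp only [argSets, dif_pos hb]; exact fun y hy => hy.1
          · simp only [argSets, dif_neg hb]; exact subset_rfl
        exact hsub.trans (ih (Nat.lt_succ_iff.mp h))
      · have : a = b + 1 := le_antisymm hab h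
        subst this; exact subset_rfl
  obtain ⟨hcn, ⟨π, hπ⟩, hsn⟩ := hbasic n
  refine ⟨π, hsn hπ, ?_⟩
  rintro π' hπ' ⟨k, hkeq, hklt⟩
  -- show π' ∈ argSets n U k.val
  have key : ∀ m : ℕ, m ≤ (k : ℕ) → π' ∈ argSets n U m := by
    intro m hm
    induction m with
    | zero => exact hπ'
    | succ m ih =>
      have hm' : m < n := lt_of_lt_of_le (lt_of_lt_of_le (Nat.lt_of_succ_le hm) k.isLt.le) le_rfl
      have hmk : (⟨m, hm'⟩ : Fin n) < k := by
        rw [Fin.lt_def]; exact Nat.lt_of_succ_le hm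
      have hπ'm : π' ∈ argSets n U m := ih (Nat.le_of_succ_le hm)
      have hπm1 : π ∈ argSets n U (m+1) := hmono (m+1) n (Nat.succ_le_of_lt hm') hπ
      simp only [argSets, dif_pos hm'] at hπm1 ⊢
      refine ⟨hπ'm, fun y hy => ?_⟩
      calc sortVec y ⟨m, hm'⟩ ≤ sortVec π ⟨m, hm'⟩ := hπm1.2 y hy
        _ = sortVec π' ⟨m, hm'⟩ := (hkeq _ hmk).symm
  have hπ'k : π' ∈ argSets n U (k : ℕ) := key (k : ℕ) le_rfl
  have hπk1 : π ∈ argSets n U ((k : ℕ)+1) := hmono _ n k.isLt hπ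
  simp only [argSets, dif_pos k.isLt] at hπk1
  have : sortVec π' ⟨(k : ℕ), k.isLt⟩ ≤ sortVec π ⟨(k : ℕ), k.isLt⟩ := hπk1.2 π' hπ'k
  simp only [Fin.eta] at this
  exact absurd hklt (not_lt.mpr this)
end

section
/- Let U ⊆ ℝ^n be a convex set. Then U contains at most one leximin-optimal element; that is, if π and π' are both leximin-optimal in U, then π = π'. -/
open Finset

/-- prefix sums of the sorted vector -/
noncomputable def pref {n : ℕ} (w : Fin n → ℝ) (k : ℕ) : ℝ :=
  ∑ j ∈ Finset.univ.filter (fun j : Fin n => (j : ℕ) < k), sortVec w j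

lemma card_filter_lt {n k : ℕ} (hk : k ≤ n) :
    (Finset.univ.filter (fun j : Fin n => (j : ℕ) < k)).card = k := by
  have h : Finset.univ.filter (fun j : Fin n => (j : ℕ) < k)
      = Finset.map (Fin.castLEEmb hk) Finset.univ := by
    ext j
    constructor
    · intro hj
      have hjk : (j : ℕ) < k := (Finset.mem_filter.mp hj).2
      exact Finset.mem_map.mpr ⟨⟨(j : ℕ), hjk⟩, Finset.mem_univ _, Fin.ext rfl⟩
    · intro hj
      obtain ⟨i, -, rfl⟩ := Finset.mem_map.mp hj
      exact Finset.mem_filter.mpr ⟨Finset.mem_univ _, by simp⟩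
  rw [h, Finset.card_map, Finset.card_univ, Fintype.card_fin]

lemma sortVec_multiset {n : ℕ} (x : Fin n → ℝ) :
    Multiset.map (sortVec x) Finset.univ.val = Multiset.map x Finset.univ.val := by
  have h : Multiset.map (⇑(Tuple.sort x)) Finset.univ.val = Finset.univ.val := by
    have := Finset.map_univ_equiv (Tuple.sort x)
    calc Multiset.map (⇑(Tuple.sort x)) Finset.univ.val
        = (Finset.map (Tuple.sort x).toEmbedding Finset.univ).val := rfl
      _ = Finset.univ.val := by rw [this]
  calc Multiset.map (sortVec x) Finset.univ.val
      = Multiset.map x (Multiset.map (⇑(Tuple.sort x)) Finset.univ.val) := by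
        rw [Multiset.map_map]; rfl
    _ = Multiset.map x Finset.univ.val := by rw [h]

/-- sum of the `A.card` smallest entries is at most the sum over `A`. -/
lemma pref_le_sum {n : ℕ} (w : Fin n → ℝ) (A : Finset (Fin n)) :
    pref w A.card ≤ ∑ i ∈ A, w i := by
  set k := A.card with hkdef
  have hk : k ≤ n := by
    simpa using Finset.card_le_card (Finset.subset_univ A)
  set B := (Finset.univ.filter (fun j : Fin n => (j : ℕ) < k)).image (⇑(Tuple.sort w)) with hB
  have hBcard : B.card = k := by
    rw [hB, Finset.card_image_of_injective _ (Tuple.sort w).injective, card_filter_lt hk]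
  have hpref : pref w k = ∑ i ∈ B, w i := by
    rw [hB, Finset.sum_image (fun a _ b _ h => (Tuple.sort w).injective h)]
    rfl
  have hkey : ∀ i ∈ B, ∀ j : Fin n, j ∉ B → w i ≤ w j := by
    intro i hi j hj
    obtain ⟨a, ha, rfl⟩ := Finset.mem_image.mp hi
    obtain ⟨b, rfl⟩ := (Tuple.sort w).surjective j
    have hb : ¬ ((b : ℕ) < k) := by
      intro h
      exact hj (Finset.mem_image.mpr ⟨b, Finset.mem_filter.mpr ⟨Finset.mem_univ _, h⟩, rfl⟩)
    have ha' : (a : ℕ) < k := (Finset.mem_filter.mp ha).2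
    have : a ≤ b := by
      rw [Fin.le_def]
      omega
    exact Tuple.monotone_sort w this
  rw [hpref]
  have hsplitB := Finset.sum_inter_add_sum_sdiff B A w
  have hsplitA := Finset.sum_inter_add_sum_sdiff A B w
  have hdiff : ∑ i ∈ B \ A, w i ≤ ∑ i ∈ A \ B, w i := by
    rcases Finset.eq_empty_or_nonempty (A \ B) with hAB | hAB
    · have hcards : (B \ A).card = (A \ B).card :=
        Finset.card_sdiff_comm (by rw [hBcard, hkdef])
      have : (B \ A) = ∅ := Finset.card_eq_zero.mp (by rw [hcards, hAB]; simp)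
      simp [this, hAB]
    · have hne : ((A \ B).image w).Nonempty := hAB.image w
      set c := ((A \ B).image w).min' hne with hc
      have hcmem : c ∈ (A \ B).image w := Finset.min'_mem _ hne
      obtain ⟨j0, hj0, hj0c⟩ := Finset.mem_image.mp hcmem
      have hub : ∀ i ∈ B \ A, w i ≤ c := by
        intro i hi
        have hiB : i ∈ B := (Finset.mem_sdiff.mp hi).1
        have hj0nB : j0 ∉ B := (Finset.mem_sdiff.mp hj0).2
        rw [← hj0c]
        exact hkey i hiB j0 hj0nB
      have hlb : ∀ j ∈ A \ B, c ≤ w j := by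
        intro j hj
        exact Finset.min'_le _ _ (Finset.mem_image_of_mem w hj)
      have h1 : ∑ i ∈ B \ A, w i ≤ (B \ A).card • c := Finset.sum_le_card_nsmul _ _ _ hub
      have h2 : (A \ B).card • c ≤ ∑ j ∈ A \ B, w j := Finset.card_nsmul_le_sum _ _ _ hlb
      have hcards : (B \ A).card = (A \ B).card :=
        Finset.card_sdiff_comm (by rw [hBcard, hkdef])
      calc ∑ i ∈ B \ A, w i ≤ (B \ A).card • c := h1
        _ = (A \ B).card • c := by rw [hcards]
        _ ≤ ∑ j ∈ A \ B, w j := h2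
  have hBA : B ∩ A = A ∩ B := Finset.inter_comm B A
  calc ∑ i ∈ B, w i = ∑ i ∈ B ∩ A, w i + ∑ i ∈ B \ A, w i := hsplitB.symm
    _ ≤ ∑ i ∈ A ∩ B, w i + ∑ i ∈ A \ B, w i := by rw [hBA]; linarith
    _ = ∑ i ∈ A, w i := hsplitA

/-- concavity of prefix sums at the midpoint -/
lemma pref_mid {n : ℕ} (x y z : Fin n → ℝ) (hz : ∀ i, z i = (x i + y i) / 2)
    {k : ℕ} (hk : k ≤ n) :
    pref x k + pref y k ≤ 2 * pref z k := by
  set C := (Finset.univ.filter (fun j : Fin n => (j : ℕ) < k)).image (⇑(Tuple.sort z)) with hC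
  have hCcard : C.card = k := by
    rw [hC, Finset.card_image_of_injective _ (Tuple.sort z).injective, card_filter_lt hk]
  have hprefz : pref z k = ∑ i ∈ C, z i := by
    rw [hC, Finset.sum_image (fun a _ b _ h => (Tuple.sort z).injective h)]
    rfl
  have hx : pref x k ≤ ∑ i ∈ C, x i := by
    have := pref_le_sum x C
    rwa [hCcard] at this
  have hy : pref y k ≤ ∑ i ∈ C, y i := by
    have := pref_le_sum y C
    rwa [hCcard] at this
  have hzz : ∑ i ∈ C, z i = (∑ i ∈ C, x i + ∑ i ∈ C, y i) / 2 := by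
    rw [← Finset.sum_add_distrib, Finset.sum_div]
    exact Finset.sum_congr rfl fun i _ => hz i
  rw [hprefz, hzz]
  linarith

/-- trichotomy: either sorted vectors coincide, or one dominates -/
lemma lex_trichotomy {n : ℕ} (x y : Fin n → ℝ) (h : sortVec x ≠ sortVec y) :
    LexDom x y ∨ LexDom y x := by
  have hne : (Finset.univ.filter (fun j : Fin n => sortVec x j ≠ sortVec y j)).Nonempty := by
    by_contra hc
    rw [Finset.not_nonempty_iff_eq_empty, Finset.filter_eq_empty_iff] at hc
    exact h (funext fun j => not_not.mp (hc (Finset.mem_univ j)))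
  set k := (Finset.univ.filter (fun j : Fin n => sortVec x j ≠ sortVec y j)).min' hne with hkdef
  have hkmem := Finset.min'_mem _ hne
  have hkne : sortVec x k ≠ sortVec y k := (Finset.mem_filter.mp hkmem).2
  have hprefix : ∀ j : Fin n, j < k → sortVec x j = sortVec y j := by
    intro j hj
    by_contra hc
    have hjmem : j ∈ Finset.univ.filter (fun j : Fin n => sortVec x j ≠ sortVec y j) := by
      simp only [Finset.mem_filter, Finset.mem_univ, true_and]
      exact hc
    have := Finset.min'_le _ j hjmem
    exact absurd (lt_of_lt_of_le hj this) (lt_irrefl j)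
  rcases lt_or_gt_of_ne hkne with hlt | hgt
  · exact Or.inr ⟨k, fun j hj => (hprefix j hj).symm, hlt⟩
  · exact Or.inl ⟨k, hprefix, hgt⟩

lemma lexdom_of_pref {n : ℕ} (z x : Fin n → ℝ) (h : ∀ k : ℕ, k ≤ n → pref x k ≤ pref z k)
    (hne : sortVec z ≠ sortVec x) : LexDom z x := by
  have hnonempty : (Finset.univ.filter (fun j : Fin n => sortVec z j ≠ sortVec x j)).Nonempty := by
    by_contra hc
    rw [Finset.not_nonempty_iff_eq_empty, Finset.filter_eq_empty_iff] at hc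
    exact hne (funext fun j => not_not.mp (hc (Finset.mem_univ j)))
  set k := (Finset.univ.filter (fun j : Fin n => sortVec z j ≠ sortVec x j)).min' hnonempty
    with hkdef
  have hkmem := Finset.min'_mem _ hnonempty
  have hkne : sortVec z k ≠ sortVec x k := (Finset.mem_filter.mp hkmem).2
  have hprefix : ∀ j : Fin n, j < k → sortVec z j = sortVec x j := by
    intro j hj
    by_contra hc
    have hjmem : j ∈ Finset.univ.filter (fun j : Fin n => sortVec z j ≠ sortVec x j) := by
      simp only [Finset.mem_filter, Finset.mem_univ, true_and]
      exact hc
    have := Finset.min'_le _ j hjmem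
    exact absurd (lt_of_lt_of_le hj this) (lt_irrefl j)
  refine ⟨k, hprefix, ?_⟩
  -- split the prefix sum at k+1
  have hsplit : ∀ w : Fin n → ℝ,
      pref w ((k : ℕ) + 1) = pref w (k : ℕ) + sortVec w k := by
    intro w
    have hins : Finset.univ.filter (fun j : Fin n => (j : ℕ) < (k : ℕ) + 1)
        = insert k (Finset.univ.filter (fun j : Fin n => (j : ℕ) < (k : ℕ))) := by
      ext j
      simp only [Finset.mem_filter, Finset.mem_univ, true_and, Finset.mem_insert]
      constructor
      · intro hj
        rcases Nat.lt_succ_iff_lt_or_eq.mp hj with h1 | h1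
        · exact Or.inr h1
        · exact Or.inl (Fin.ext h1)
      · rintro (rfl | hj)
        · omega
        · omega
    have hknotmem : k ∉ Finset.univ.filter (fun j : Fin n => (j : ℕ) < (k : ℕ)) := by
      simp
    unfold pref
    rw [hins, Finset.sum_insert hknotmem]
    ring
  have hpeq : pref z (k : ℕ) = pref x (k : ℕ) := by
    unfold pref
    refine Finset.sum_congr rfl fun j hj => ?_
    have : (j : ℕ) < (k : ℕ) := (Finset.mem_filter.mp hj).2
    exact hprefix j this
  have hk1 : (k : ℕ) + 1 ≤ n := k.isLt
  have := h ((k : ℕ) + 1) hk1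
  rw [hsplit z, hsplit x, hpeq] at this
  have hle : sortVec x k ≤ sortVec z k := by linarith
  exact lt_of_le_of_ne hle (Ne.symm hkne)

/-- if x, y, and their midpoint all have the same multiset of values, then x = y -/
lemma eq_of_mid_same_multiset {n : ℕ} (x y z : Fin n → ℝ)
    (hz : ∀ i, z i = (x i + y i) / 2)
    (hxy : Multiset.map x Finset.univ.val = Multiset.map y Finset.univ.val)
    (hxz : Multiset.map x Finset.univ.val = Multiset.map z Finset.univ.val) :
    x = y := by
  classical
  by_contra hne
  have hD : (Finset.univ.filter (fun i : Fin n => x i ≠ y i)).Nonempty := by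
    by_contra hc
    rw [Finset.not_nonempty_iff_eq_empty, Finset.filter_eq_empty_iff] at hc
    exact hne (funext fun i => not_not.mp (hc (Finset.mem_univ i)))
  set D := Finset.univ.filter (fun i : Fin n => x i ≠ y i) with hDdef
  have hDim : (D.image (fun i => min (x i) (y i))).Nonempty := hD.image _
  set t := (D.image (fun i => min (x i) (y i))).min' hDim with ht
  obtain ⟨i0, hi0D, hi0t⟩ := Finset.mem_image.mp (Finset.min'_mem _ hDim)
  have hi0ne : x i0 ≠ y i0 := (Finset.mem_filter.mp hi0D).2
  have hmin : ∀ i : Fin n, x i ≠ y i → t ≤ min (x i) (y i) := by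
    intro i hi
    have himem : i ∈ D := by
      rw [hDdef]
      simp only [Finset.mem_filter, Finset.mem_univ, true_and]
      exact hi
    have hmem : min (x i) (y i) ∈ D.image (fun i => min (x i) (y i)) :=
      Finset.mem_image_of_mem _ himem
    rw [ht]
    exact Finset.min'_le _ _ hmem
  -- counts of values ≤ t agree among x, y, z
  have hcount : ∀ (f g : Fin n → ℝ),
      Multiset.map f Finset.univ.val = Multiset.map g Finset.univ.val →
      (Finset.univ.filter (fun i => f i ≤ t)).card
        = (Finset.univ.filter (fun i => g i ≤ t)).card := by
    intro f g hfg
    have h1 := congrArg (Multiset.countP (fun a => a ≤ t)) hfg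
    rwa [Multiset.countP_map, Multiset.countP_map] at h1
  -- key: {i | z i ≤ t} = {i | x i ≤ t ∧ x i = y i}
  have hkey : ∀ i : Fin n, z i ≤ t ↔ (x i ≤ t ∧ x i = y i) := by
    intro i
    constructor
    · intro hzi
      rw [hz i] at hzi
      by_cases heq : x i = y i
      · refine ⟨?_, heq⟩
        rw [heq] at hzi ⊢
        linarith
      · have h1 := hmin i heq
        have h2 : t ≤ x i := le_trans h1 (min_le_left _ _)
        have h3 : t ≤ y i := le_trans h1 (min_le_right _ _)
        have hx : x i = t := by linarith
        have hy : y i = t := by linarith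
        exact absurd (hx.trans hy.symm) heq
    · rintro ⟨hxi, heq⟩
      rw [hz i, ← heq]
      linarith
  have hsetZ : Finset.univ.filter (fun i => z i ≤ t)
      = Finset.univ.filter (fun i => x i ≤ t ∧ x i = y i) := by
    ext i
    simp only [Finset.mem_filter, Finset.mem_univ, true_and]
    exact hkey i
  -- i0 has min (x i0) (y i0) = t, so one of x i0 ≤ t or y i0 ≤ t
  rcases le_total (x i0) (y i0) with hc | hc
  · -- x i0 = t ≤ t, x i0 ≠ y i0, so i0 ∈ {x ≤ t} \ {z ≤ t}
    have hx0 : x i0 ≤ t := by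
      rw [ht, ← hi0t, min_eq_left hc]
    have hsub : Finset.univ.filter (fun i => z i ≤ t)
        ⊂ Finset.univ.filter (fun i => x i ≤ t) := by
      rw [hsetZ]
      have hsub' : Finset.univ.filter (fun i => x i ≤ t ∧ x i = y i)
          ⊆ Finset.univ.filter (fun i => x i ≤ t) := by
        intro i hi
        have h2 := (Finset.mem_filter.mp hi).2
        exact Finset.mem_filter.mpr ⟨Finset.mem_univ _, h2.1⟩
      refine (Finset.ssubset_iff_of_subset hsub').mpr
        ⟨i0, Finset.mem_filter.mpr ⟨Finset.mem_univ _, hx0⟩, ?_⟩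
      simp only [Finset.mem_filter, Finset.mem_univ, true_and, not_and]
      intro _
      exact hi0ne
    have := Finset.card_lt_card hsub
    have hcnt := hcount x z hxz
    omega
  · have hy0 : y i0 ≤ t := by
      rw [ht, ← hi0t, min_eq_right hc]
    have hyz : Multiset.map y Finset.univ.val = Multiset.map z Finset.univ.val :=
      hxy ▸ hxz
    have hsub : Finset.univ.filter (fun i => z i ≤ t)
        ⊂ Finset.univ.filter (fun i => y i ≤ t) := by
      rw [hsetZ]
      have hsub' : Finset.univ.filter (fun i => x i ≤ t ∧ x i = y i)
          ⊆ Finset.univ.filter (fun i => y i ≤ t) := by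
        intro i hi
        have h2 := (Finset.mem_filter.mp hi).2
        exact Finset.mem_filter.mpr ⟨Finset.mem_univ _, h2.2 ▸ h2.1⟩
      refine (Finset.ssubset_iff_of_subset hsub').mpr
        ⟨i0, Finset.mem_filter.mpr ⟨Finset.mem_univ _, hy0⟩, ?_⟩
      simp only [Finset.mem_filter, Finset.mem_univ, true_and, not_and]
      intro _
      exact hi0ne
    have := Finset.card_lt_card hsub
    have hcnt := hcount y z hyz
    omega

/-- A convex set contains at most one leximin-optimal element. -/
theorem leximinOpt_unique_of_convex (n : ℕ) (U : Set (Fin n → ℝ)) (hU : Convex ℝ U)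
    (π π' : Fin n → ℝ)
    (hπ : π ∈ U) (hopt : ∀ ρ ∈ U, ¬ LexDom ρ π)
    (hπ' : π' ∈ U) (hopt' : ∀ ρ ∈ U, ¬ LexDom ρ π') :
    π = π' := by
  set z : Fin n → ℝ := (1/2 : ℝ) • π + (1/2 : ℝ) • π' with hzdef
  have hzU : z ∈ U := hU hπ hπ' (by norm_num) (by norm_num) (by norm_num)
  have hzi : ∀ i, z i = (π i + π' i) / 2 := by
    intro i
    simp [hzdef]
    ring
  -- sorted vectors of π and π' coincide
  have hsort : sortVec π = sortVec π' := by
    by_contra hne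
    rcases lex_trichotomy π π' hne with h | h
    · exact hopt' π hπ h
    · exact hopt π' hπ' h
  -- prefix sums of z dominate those of π
  have hpref : ∀ k : ℕ, k ≤ n → pref π k ≤ pref z k := by
    intro k hk
    have h1 := pref_mid π π' z hzi hk
    have h2 : pref π k = pref π' k := by
      unfold pref
      rw [hsort]
    linarith
  -- z's sorted vector equals π's
  have hzx : sortVec z = sortVec π := by
    by_contra hne
    exact hopt z hzU (lexdom_of_pref z π hpref hne)
  -- conclude via multiset equality
  have hmxy : Multiset.map π Finset.univ.val = Multiset.map π' Finset.univ.val := by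
    rw [← sortVec_multiset π, ← sortVec_multiset π', hsort]
  have hmxz : Multiset.map π Finset.univ.val = Multiset.map z Finset.univ.val := by
    rw [← sortVec_multiset π, ← sortVec_multiset z, hzx]
  exact eq_of_mid_same_multiset π π' z hzi hmxy hmxz
end

section
/- For every combinatorial auction, the core U contains exactly one leximin-optimal element π^BLO, and π^BLO is Pareto optimal in U: there is no π' ∈ U with π'_i ≥ π^BLO_i for all i ∈ N and π'_j > π^BLO_j for some j ∈ N. -/
/-- The core polytope of a coalition value function `w`. -/
def CorePoly {n : ℕ} (w : Finset (Fin n) → ℝ) : Set (Fin n → ℝ) :=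
  {π | (∀ i, 0 ≤ π i) ∧ ∀ S : Finset (Fin n), ∑ i ∈ Finset.univ \ S, π i ≤ w Finset.univ - w S}

/-- An allocation to the coalition `S`: pairwise disjoint bundles of items. -/
def IsAlloc {n m : ℕ} (S : Finset (Fin n)) (a : Fin n → Finset (Fin m)) : Prop :=
  ∀ i ∈ S, ∀ j ∈ S, i ≠ j → Disjoint (a i) (a j)

/-- The coalition value: the maximum total value over allocations to `S`. -/
noncomputable def coalW {n m : ℕ} (v : Fin n → Finset (Fin m) → ℝ) (S : Finset (Fin n)) : ℝ :=
  sSup (Set.image (fun a : Fin n → Finset (Fin m) => ∑ i ∈ S, v i (a i)) {a | IsAlloc S a})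

/-- The set of winners: bidders whose removal strictly decreases the optimal welfare. -/
noncomputable def winners {n m : ℕ} (v : Fin n → Finset (Fin m) → ℝ) : Finset (Fin n) :=
  @Finset.filter _ (fun i => coalW v (Finset.univ \ {i}) < coalW v Finset.univ)
    (Classical.decPred _) Finset.univ
namespace BLOaux

open Finset

variable {n : ℕ}

lemma sortVec_monotone (x : Fin n → ℝ) : Monotone (sortVec x) := Tuple.monotone_sort x

/-- number of coordinates `≤ c`. -/
noncomputable def Nle (x : Fin n → ℝ) (c : ℝ) : ℕ :=
  (Finset.univ.filter (fun i => x i ≤ c)).card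

lemma card_filter_sort (x : Fin n → ℝ) (p : ℝ → Prop) [DecidablePred p] :
    (univ.filter fun j => p (sortVec x j)).card = (univ.filter fun i => p (x i)).card := by
  apply Finset.card_bij (fun j _ => Tuple.sort x j)
  · intro j hj
    simp only [mem_filter, mem_univ, true_and] at hj ⊢
    exact hj
  · intro a _ b _ h
    exact (Tuple.sort x).injective h
  · intro i hi
    refine ⟨(Tuple.sort x).symm i, ?_, by simp⟩
    simp only [mem_filter, mem_univ, true_and, sortVec, Function.comp] at hi ⊢
    exact Finset.mem_filter.mpr ⟨Finset.mem_univ _, by simpa [sortVec] using hi⟩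

lemma Nle_sort (x : Fin n → ℝ) (c : ℝ) :
    Nle x c = (univ.filter fun j => sortVec x j ≤ c).card :=
  (card_filter_sort x (· ≤ c)).symm

lemma sort_le_iff (x : Fin n → ℝ) (k : Fin n) (c : ℝ) :
    sortVec x k ≤ c ↔ (k : ℕ) + 1 ≤ Nle x c := by
  rw [Nle_sort]
  constructor
  · intro h
    have hsub : Finset.Iic k ⊆ univ.filter fun j => sortVec x j ≤ c := by
      intro j hj
      simp only [Finset.mem_Iic] at hj
      simp only [mem_filter, mem_univ, true_and]
      exact le_trans (sortVec_monotone x hj) h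
    have := Finset.card_le_card hsub
    rwa [Fin.card_Iic] at this
  · intro h
    by_contra hc
    push_neg at hc
    have hsub : (univ.filter fun j => sortVec x j ≤ c) ⊆ Finset.Iio k := by
      intro j hj
      simp only [mem_filter, mem_univ, true_and] at hj
      simp only [Finset.mem_Iio]
      by_contra hk
      push_neg at hk
      exact absurd (le_trans (sortVec_monotone x hk) hj) (not_le.mpr hc)
    have := Finset.card_le_card hsub
    rw [Fin.card_Iio] at this
    omega

lemma sortVec_le_sortVec {x y : Fin n → ℝ} (h : ∀ i, x i ≤ y i) (k : Fin n) :
    sortVec x k ≤ sortVec y k := by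
  rw [sort_le_iff]
  refine le_trans ((sort_le_iff y k _).mp le_rfl) (Finset.card_le_card ?_)
  intro i hi
  simp only [mem_filter, mem_univ, true_and] at hi ⊢
  exact le_trans (h i) hi

lemma sort_lip (x y : Fin n → ℝ) (k : Fin n) :
    sortVec x k ≤ sortVec y k + dist x y := by
  rw [sort_le_iff]
  refine le_trans ((sort_le_iff y k _).mp le_rfl) (Finset.card_le_card ?_)
  intro i hi
  simp only [mem_filter, mem_univ, true_and] at hi ⊢
  have h1 : dist (x i) (y i) ≤ dist x y := dist_le_pi_dist x y i
  rw [Real.dist_eq, abs_sub_le_iff] at h1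
  linarith [h1.1]

lemma cont_sort (k : Fin n) : Continuous fun x : Fin n → ℝ => sortVec x k := by
  have hl : LipschitzWith 1 (fun x : Fin n → ℝ => sortVec x k) := by
    apply LipschitzWith.of_dist_le_mul
    intro x y
    rw [NNReal.coe_one, one_mul, Real.dist_eq, abs_sub_le_iff]
    constructor
    · linarith [sort_lip x y k]
    · linarith [sort_lip y x k, dist_comm x y]
  exact hl.continuous

lemma filter_sort_eq (x : Fin n → ℝ) (c : ℝ) :
    (univ.filter fun j : Fin n => sortVec x j ≤ c)
      = univ.filter fun j : Fin n => (j : ℕ) < Nle x c := by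
  ext j
  simp only [mem_filter, mem_univ, true_and]
  rw [sort_le_iff]
  omega



/-- sum of the `k` smallest entries of `x`. -/
noncomputable def F (x : Fin n → ℝ) (k : ℕ) : ℝ :=
  ∑ j ∈ univ.filter (fun j : Fin n => (j : ℕ) < k), sortVec x j

lemma filter_lt_eq_image {k : ℕ} (hk : k ≤ n) :
    (univ.filter fun j : Fin n => (j : ℕ) < k) = univ.image (Fin.castLE hk) := by
  ext j
  simp only [mem_filter, mem_univ, true_and, Finset.mem_image]
  constructor
  · intro hj
    exact ⟨⟨j, hj⟩, by simp [Fin.ext_iff]⟩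
  · rintro ⟨i, rfl⟩
    exact i.isLt

lemma card_filter_lt {k : ℕ} (hk : k ≤ n) :
    (univ.filter fun j : Fin n => (j : ℕ) < k).card = k := by
  rw [filter_lt_eq_image hk,
    Finset.card_image_of_injective _ (Fin.castLE_injective hk)]
  simp

lemma le_apply_strictMono {k : ℕ} (f : Fin k → Fin n) (hf : StrictMono f) :
    ∀ v (h : v < k), v ≤ (f ⟨v, h⟩ : ℕ) := by
  intro v
  induction v with
  | zero => intro _; exact Nat.zero_le _
  | succ v ih =>
    intro h
    have h' : v < k := Nat.lt_of_succ_lt h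
    have h1 := hf (show (⟨v, h'⟩ : Fin k) < ⟨v + 1, h⟩ by simp [Fin.lt_def])
    have h2 := ih h'
    rw [Fin.lt_def] at h1
    omega

lemma mono_sum_le {m : Fin n → ℝ} (hm : Monotone m) (B : Finset (Fin n)) {k : ℕ}
    (hB : B.card = k) :
    ∑ j ∈ univ.filter (fun j : Fin n => (j : ℕ) < k), m j ≤ ∑ j ∈ B, m j := by
  have hk : k ≤ n := by
    rw [← hB]
    simpa using Finset.card_le_card (Finset.subset_univ B)
  set e := B.orderEmbOfFin hB with he
  have hBe : B = univ.image e := by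
    ext j
    simp only [Finset.mem_image, mem_univ, true_and]
    constructor
    · intro hj
      have : j ∈ Set.range e := by rw [Finset.range_orderEmbOfFin]; exact hj
      obtain ⟨i, hi⟩ := this
      exact ⟨i, hi⟩
    · rintro ⟨i, rfl⟩
      exact Finset.orderEmbOfFin_mem B hB i
  rw [hBe, Finset.sum_image (fun a _ b _ h => e.injective h),
    filter_lt_eq_image hk, Finset.sum_image (fun a _ b _ h => Fin.castLE_injective hk h)]
  apply Finset.sum_le_sum
  intro i _
  apply hm
  rw [Fin.le_def]
  have := le_apply_strictMono e e.strictMono i i.isLt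
  simpa using this

lemma F_le_sum (x : Fin n → ℝ) {k : ℕ} (A : Finset (Fin n)) (hA : A.card = k) :
    F x k ≤ ∑ i ∈ A, x i := by
  have hstep : ∑ i ∈ A, x i = ∑ j ∈ A.image (Tuple.sort x).symm, sortVec x j := by
    rw [Finset.sum_image (fun a _ b _ h => (Tuple.sort x).symm.injective h)]
    apply Finset.sum_congr rfl
    intro i _
    simp [sortVec]
  rw [hstep]
  exact mono_sum_le (sortVec_monotone x) _
    (by rw [Finset.card_image_of_injective _ (Tuple.sort x).symm.injective, hA])

lemma exists_realizer (x : Fin n → ℝ) {k : ℕ} (hk : k ≤ n) :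
    ∃ A : Finset (Fin n), A.card = k ∧ F x k = ∑ i ∈ A, x i := by
  refine ⟨(univ.filter (fun j : Fin n => (j : ℕ) < k)).image (Tuple.sort x), ?_, ?_⟩
  · rw [Finset.card_image_of_injective _ (Tuple.sort x).injective, card_filter_lt hk]
  · rw [Finset.sum_image (fun a _ b _ h => (Tuple.sort x).injective h)]
    rfl

lemma F_mid (x y : Fin n → ℝ) {k : ℕ} (hk : k ≤ n) :
    (F x k + F y k) / 2 ≤ F (fun i => (x i + y i) / 2) k := by
  obtain ⟨A, hc, hFe⟩ := exists_realizer (fun i => (x i + y i) / 2) hk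
  rw [hFe]
  have h1 := F_le_sum x A hc
  have h2 := F_le_sum y A hc
  have h3 : ∑ i ∈ A, (x i + y i) / 2 = (∑ i ∈ A, x i + ∑ i ∈ A, y i) / 2 := by
    rw [← Finset.sum_add_distrib, Finset.sum_div]
  linarith

lemma F_succ (x : Fin n → ℝ) {k : ℕ} (hk : k < n) :
    F x (k + 1) = F x k + sortVec x ⟨k, hk⟩ := by
  have hins : (univ.filter fun j : Fin n => (j : ℕ) < k + 1)
      = insert ⟨k, hk⟩ (univ.filter fun j : Fin n => (j : ℕ) < k) := by
    ext j
    simp only [mem_filter, mem_univ, true_and, Finset.mem_insert, Fin.ext_iff]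
    omega
  rw [F, hins, Finset.sum_insert (by simp)]
  rw [F]
  ring

lemma sum_filter_le (x : Fin n → ℝ) (c : ℝ) :
    ∑ i ∈ univ.filter (fun i => x i ≤ c), x i = F x (Nle x c) := by
  rw [F, ← filter_sort_eq]
  refine (Finset.sum_bij (fun j _ => Tuple.sort x j) ?_ ?_ ?_ ?_).symm
  · intro j hj
    simp only [mem_filter, mem_univ, true_and] at hj ⊢
    exact hj
  · intro a _ b _ h
    exact (Tuple.sort x).injective h
  · intro i hi
    refine ⟨(Tuple.sort x).symm i, ?_, by simp⟩
    simp only [mem_filter, mem_univ, true_and, sortVec, Function.comp] at hi ⊢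
    exact Finset.mem_filter.mpr ⟨Finset.mem_univ _, by simpa [sortVec] using hi⟩
  · intro j _
    rfl

lemma sum_sortVec (x : Fin n → ℝ) : ∑ j, sortVec x j = ∑ i, x i :=
  Equiv.sum_comp (Tuple.sort x) x

lemma trichotomy (x y : Fin n → ℝ) :
    sortVec x = sortVec y ∨ LexDom x y ∨ LexDom y x := by
  by_cases h : sortVec x = sortVec y
  · exact Or.inl h
  right
  have hne : (univ.filter fun j : Fin n => sortVec x j ≠ sortVec y j).Nonempty := by
    obtain ⟨k, hk⟩ := Function.ne_iff.mp h
    exact ⟨k, by simp [hk]⟩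
  set k := Finset.min' _ hne with hkdef
  have hk : sortVec x k ≠ sortVec y k := by
    have := Finset.min'_mem _ hne
    simpa using this
  have hj : ∀ j, j < k → sortVec x j = sortVec y j := by
    intro j hjk
    by_contra hj
    exact absurd (Finset.min'_le _ j (by simp [hj])) (not_le.mpr hjk)
  rcases lt_or_gt_of_ne hk with h1 | h1
  · exact Or.inr ⟨k, fun j hj' => (hj j hj').symm, h1⟩
  · exact Or.inl ⟨k, hj, h1⟩



lemma filter_eq_of (x z : Fin n → ℝ) (c : ℝ) (hzN : Nle z c = Nle x c)
    (hxe : ∑ i ∈ univ.filter (fun i => z i ≤ c), x i = F x (Nle x c)) :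
    univ.filter (fun i => z i ≤ c) = univ.filter (fun i => x i ≤ c) := by
  set Sz := univ.filter (fun i => z i ≤ c) with hSz
  set Sx := univ.filter (fun i => x i ≤ c) with hSx
  have hcz : Sz.card = Nle x c := hzN
  have hcx : Sx.card = Nle x c := rfl
  apply Finset.eq_of_subset_of_card_le ?_ (by omega)
  intro i0 hi0
  by_contra hi0x
  -- find i1 ∈ Sx \ Sz
  have hd : (Sz \ Sx).card = (Sx \ Sz).card := by
    have h1 := Finset.card_sdiff_add_card_inter Sz Sx
    have h2 := Finset.card_sdiff_add_card_inter Sx Sz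
    rw [Finset.inter_comm] at h2
    omega
  have hne : (Sx \ Sz).Nonempty := by
    rw [← Finset.card_pos, ← hd, Finset.card_pos]
    exact ⟨i0, Finset.mem_sdiff.mpr ⟨hi0, hi0x⟩⟩
  obtain ⟨i1, hi1⟩ := hne
  rw [Finset.mem_sdiff] at hi1
  have hxi0 : c < x i0 := by
    by_contra hcc
    exact hi0x (by simp only [hSx, mem_filter, mem_univ, true_and]; linarith)
  have hxi1 : x i1 ≤ c := by
    have := hi1.1
    simp only [hSx, mem_filter, mem_univ, true_and] at this
    exact this
  set A := insert i1 (Sz.erase i0) with hA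
  have hi1e : i1 ∉ Sz.erase i0 := fun h => hi1.2 (Finset.mem_of_mem_erase h)
  have hAc : A.card = Nle x c := by
    rw [hA, Finset.card_insert_of_notMem hi1e, Finset.card_erase_of_mem hi0]
    have : 1 ≤ Sz.card := Finset.card_pos.mpr ⟨i0, hi0⟩
    omega
  have hAs : ∑ i ∈ A, x i = x i1 + (∑ i ∈ Sz, x i - x i0) := by
    rw [hA, Finset.sum_insert hi1e]
    have := Finset.add_sum_erase Sz x hi0
    linarith
  have hge := F_le_sum x A hAc
  rw [hAs, hxe] at hge
  linarith

lemma eq_of_sort_eq_mid (x y : Fin n → ℝ) (hs : sortVec x = sortVec y)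
    (hmid : sortVec (fun i => (x i + y i) / 2) = sortVec x) : x = y := by
  set z := fun i => (x i + y i) / 2 with hz
  have hNle : ∀ (w w' : Fin n → ℝ), sortVec w = sortVec w' → ∀ c, Nle w c = Nle w' c := by
    intro w w' hww c
    rw [Nle_sort, Nle_sort, hww]
  have key : ∀ c, univ.filter (fun i => z i ≤ c) = univ.filter (fun i => x i ≤ c)
      ∧ univ.filter (fun i => z i ≤ c) = univ.filter (fun i => y i ≤ c) := by
    intro c
    set N := Nle x c with hN
    have hzN : Nle z c = N := hNle z x hmid c
    have hyN : Nle y c = N := hNle y x hs.symm c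
    have hFz : ∀ j : ℕ, F z j = F x j := fun j => by
      rw [F, F, hmid]
    have hFy : ∀ j : ℕ, F y j = F x j := fun j => by
      rw [F, F, hs]
    have hsum : ∑ i ∈ univ.filter (fun i => z i ≤ c), z i = F x N := by
      rw [sum_filter_le z c, hzN, hFz]
    have hsplit : ∑ i ∈ univ.filter (fun i => z i ≤ c), z i
        = (∑ i ∈ univ.filter (fun i => z i ≤ c), x i
            + ∑ i ∈ univ.filter (fun i => z i ≤ c), y i) / 2 := by
      rw [← Finset.sum_add_distrib, Finset.sum_div]
    have hcz : (univ.filter (fun i => z i ≤ c)).card = N := hzN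
    have hx1 : F x N ≤ ∑ i ∈ univ.filter (fun i => z i ≤ c), x i := F_le_sum x _ hcz
    have hy1 : F y N ≤ ∑ i ∈ univ.filter (fun i => z i ≤ c), y i := F_le_sum y _ hcz
    rw [hFy] at hy1
    have hxe : ∑ i ∈ univ.filter (fun i => z i ≤ c), x i = F x N := by linarith
    have hye : ∑ i ∈ univ.filter (fun i => z i ≤ c), y i = F y N := by
      rw [hFy]; linarith
    refine ⟨filter_eq_of x z c hzN hxe, filter_eq_of y z c (by rw [hzN, hyN]) ?_⟩
    rw [hyN]
    exact hye
  have hxy : ∀ c, univ.filter (fun i => x i ≤ c) = univ.filter (fun i => y i ≤ c) := by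
    intro c
    rw [← (key c).1, (key c).2]
  funext i
  have h1 : y i ≤ x i := by
    have : i ∈ univ.filter (fun j => y j ≤ x i) := by
      rw [← hxy]
      simp
    simpa using this
  have h2 : x i ≤ y i := by
    have : i ∈ univ.filter (fun j => x j ≤ y i) := by
      rw [hxy]
      simp
    simpa using this
  linarith

lemma lexdom_mid (x y : Fin n → ℝ) (hs : sortVec x = sortVec y) (hne : x ≠ y) :
    LexDom (fun i => (x i + y i) / 2) x := by
  set z := fun i => (x i + y i) / 2 with hz
  rcases trichotomy z x with h | h | h
  · exact absurd (eq_of_sort_eq_mid x y hs h) hne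
  · exact h
  · exfalso
    obtain ⟨k, hjs, hlt⟩ := h
    have hFy : ∀ j : ℕ, F y j = F x j := fun j => by rw [F, F, hs]
    have h1 : F x (k.val + 1) ≤ F z (k.val + 1) := by
      have := F_mid x y (k := k.val + 1) (Nat.succ_le_of_lt k.isLt)
      rw [hFy] at this
      linarith
    have hFk : F z k.val = F x k.val := by
      apply Finset.sum_congr rfl
      intro j hj
      simp only [mem_filter, mem_univ, true_and] at hj
      exact (hjs j (by rwa [Fin.lt_def])).symm
    rw [F_succ z k.isLt, F_succ x k.isLt, hFk] at h1
    have hke : (⟨k.val, k.isLt⟩ : Fin n) = k := rfl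
    rw [hke] at h1
    linarith



noncomputable def Useq (U : Set (Fin n → ℝ)) : ℕ → Set (Fin n → ℝ)
  | 0 => U
  | (k + 1) =>
    if h : k < n then
      {x ∈ Useq U k | ∀ y ∈ Useq U k, sortVec y ⟨k, h⟩ ≤ sortVec x ⟨k, h⟩}
    else Useq U k

lemma useq_succ_subset (U : Set (Fin n → ℝ)) (k : ℕ) : Useq U (k + 1) ⊆ Useq U k := by
  rw [Useq]
  split_ifs with h
  · exact fun x hx => hx.1
  · exact fun x hx => hx

lemma useq_subset (U : Set (Fin n → ℝ)) : ∀ {j k : ℕ}, j ≤ k → Useq U k ⊆ Useq U j := by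
  intro j k h
  induction k with
  | zero => rw [Nat.le_zero.mp h]
  | succ k ih =>
    rcases Nat.lt_succ_iff_lt_or_eq.mp (Nat.lt_succ_of_le h) with h' | h'
    · exact (useq_succ_subset U k).trans (ih (Nat.lt_succ_iff.mp h'))
    · rw [h']

lemma useq_cn (U : Set (Fin n → ℝ)) (hc : IsCompact U) (hne : U.Nonempty) :
    ∀ k, IsCompact (Useq U k) ∧ (Useq U k).Nonempty := by
  intro k
  induction k with
  | zero => exact ⟨hc, hne⟩
  | succ k ih =>
    rw [Useq]
    split_ifs with h
    · obtain ⟨ihc, ihne⟩ := ih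
      obtain ⟨x0, hx0, hmax⟩ := ihc.exists_isMaxOn ihne (cont_sort ⟨k, h⟩).continuousOn
      constructor
      · have hset : {x ∈ Useq U k | ∀ y ∈ Useq U k, sortVec y ⟨k, h⟩ ≤ sortVec x ⟨k, h⟩}
            = Useq U k ∩ ⋂ y ∈ Useq U k, {x | sortVec y ⟨k, h⟩ ≤ sortVec x ⟨k, h⟩} := by
          ext x
          simp only [Set.mem_sep_iff, Set.mem_inter_iff, Set.mem_iInter, Set.mem_setOf_eq]
        rw [hset]
        exact ihc.inter_right (isClosed_biInter fun y _ =>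
          isClosed_le continuous_const (cont_sort _))
      · exact ⟨x0, hx0, fun y hy => hmax hy⟩
    · exact ih

lemma exists_opt (U : Set (Fin n → ℝ)) (hc : IsCompact U) (hne : U.Nonempty) :
    ∃ π ∈ U, ∀ π' ∈ U, ¬ LexDom π' π := by
  obtain ⟨π, hπ⟩ := (useq_cn U hc hne n).2
  have hmem : ∀ k, k ≤ n → π ∈ Useq U k := fun k hk => useq_subset U hk hπ
  refine ⟨π, hmem 0 (Nat.zero_le n), ?_⟩
  rintro π' hπ' ⟨k, hjs, hlt⟩
  have key : ∀ j, j ≤ k.val → π' ∈ Useq U j := by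
    intro j
    induction j with
    | zero => intro _; exact hπ'
    | succ j ih =>
      intro hj
      have hjn : j < n := lt_of_lt_of_le (Nat.lt_of_succ_le hj) (le_of_lt k.isLt)
      rw [Useq, dif_pos hjn]
      refine ⟨ih (le_of_lt (Nat.lt_of_succ_le hj)), ?_⟩
      intro y hy
      have hπj1 : π ∈ Useq U (j + 1) := hmem (j + 1) (Nat.succ_le_of_lt hjn)
      rw [Useq, dif_pos hjn] at hπj1
      have h1 : sortVec y ⟨j, hjn⟩ ≤ sortVec π ⟨j, hjn⟩ := hπj1.2 y hy
      have h2 : sortVec π' ⟨j, hjn⟩ = sortVec π ⟨j, hjn⟩ :=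
        hjs ⟨j, hjn⟩ (by rw [Fin.lt_def]; exact Nat.lt_of_succ_le hj)
      linarith
  have hπ'k : π' ∈ Useq U k.val := key k.val le_rfl
  have hπk1 : π ∈ Useq U (k.val + 1) := hmem (k.val + 1) (Nat.succ_le_of_lt k.isLt)
  rw [Useq, dif_pos k.isLt] at hπk1
  have := hπk1.2 π' hπ'k
  have hke : (⟨k.val, k.isLt⟩ : Fin n) = k := rfl
  rw [hke] at this
  linarith



section Core


variable {m : ℕ} (v : Fin n → Finset (Fin m) → ℝ)

lemma alloc_empty (S : Finset (Fin n)) : IsAlloc S (fun _ => (∅ : Finset (Fin m))) :=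
  fun _ _ _ _ _ => by simp

lemma coalW_ge (S : Finset (Fin n)) (a : Fin n → Finset (Fin m)) (ha : IsAlloc S a) :
    ∑ i ∈ S, v i (a i) ≤ coalW v S := by
  apply le_csSup
  · exact ((Set.toFinite {a : Fin n → Finset (Fin m) | IsAlloc S a}).image _).bddAbove
  · exact ⟨a, ha, rfl⟩

lemma coalW_le (S : Finset (Fin n)) (B : ℝ)
    (hB : ∀ a, IsAlloc S a → ∑ i ∈ S, v i (a i) ≤ B) : coalW v S ≤ B := by
  have hne : (Set.image (fun a : Fin n → Finset (Fin m) => ∑ i ∈ S, v i (a i))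
      {a | IsAlloc S a}).Nonempty :=
    ⟨∑ i ∈ S, v i ∅, ⟨fun _ => ∅, alloc_empty S, rfl⟩⟩
  refine csSup_le hne ?_
  rintro b ⟨a, ha, rfl⟩
  exact hB a ha

lemma coalW_nonneg (hv0 : ∀ i, v i ∅ = 0) (S : Finset (Fin n)) : 0 ≤ coalW v S := by
  have := coalW_ge v S (fun _ => ∅) (alloc_empty S)
  simp only [hv0, Finset.sum_const_zero] at this
  exact this

lemma coalW_le_univ (hv0 : ∀ i, v i ∅ = 0) (S : Finset (Fin n)) :
    coalW v S ≤ coalW v Finset.univ := by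
  apply coalW_le
  intro a ha
  classical
  set a' := fun i => if i ∈ S then a i else (∅ : Finset (Fin m)) with ha'
  have h1 : IsAlloc Finset.univ a' := by
    intro i _ j _ hij
    by_cases hi : i ∈ S <;> by_cases hj2 : j ∈ S <;> simp only [ha', hi, hj2, if_pos, if_neg,
      if_true, if_false]
    · exact ha i hi j hj2 hij
    · simp
    · simp
    · simp
  have h2 : ∑ i ∈ S, v i (a i) = ∑ i ∈ Finset.univ, v i (a' i) := by
    rw [← Finset.sum_subset (Finset.subset_univ S)
      (fun i _ hi => by simp [ha', hi, hv0])]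
    apply Finset.sum_congr rfl
    intro i hi
    simp [ha', hi]
  rw [h2]
  exact coalW_ge v Finset.univ a' h1

lemma zero_mem_core (hv0 : ∀ i, v i ∅ = 0) : (0 : Fin n → ℝ) ∈ CorePoly (coalW v) := by
  refine ⟨fun i => le_rfl, fun S => ?_⟩
  simp only [Pi.zero_apply, Finset.sum_const_zero, sub_nonneg]
  exact coalW_le_univ v hv0 S

lemma core_bound (hv0 : ∀ i, v i ∅ = 0) (π : Fin n → ℝ) (hπ : π ∈ CorePoly (coalW v))
    (i : Fin n) : π i ≤ coalW v Finset.univ := by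
  have h := hπ.2 (Finset.univ \ {i})
  rw [Finset.sdiff_sdiff_self_left, Finset.univ_inter, Finset.sum_singleton] at h
  linarith [coalW_nonneg v hv0 (Finset.univ \ {i})]

lemma core_closed (w : Finset (Fin n) → ℝ) : IsClosed (CorePoly w) := by
  have hrepr : CorePoly w = (⋂ i, {π : Fin n → ℝ | 0 ≤ π i}) ∩
      ⋂ S : Finset (Fin n), {π : Fin n → ℝ | ∑ i ∈ Finset.univ \ S, π i ≤ w Finset.univ - w S} := by
    ext π
    simp only [CorePoly, Set.mem_setOf_eq, Set.mem_inter_iff, Set.mem_iInter]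
  rw [hrepr]
  exact (isClosed_iInter fun i => isClosed_le continuous_const (continuous_apply i)).inter
    (isClosed_iInter fun S => isClosed_le
      (continuous_finset_sum _ fun i _ => continuous_apply i) continuous_const)

lemma core_compact (hv0 : ∀ i, v i ∅ = 0) : IsCompact (CorePoly (coalW v)) := by
  apply IsCompact.of_isClosed_subset
    (isCompact_Icc (a := (0 : Fin n → ℝ)) (b := fun _ => coalW v Finset.univ))
    (core_closed _)
  intro π hπ
  rw [Set.mem_Icc]
  constructor
  · intro i
    exact hπ.1 i
  · intro i
    exact core_bound v hv0 π hπ i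

lemma core_mid (w : Finset (Fin n) → ℝ) {x y : Fin n → ℝ} (hx : x ∈ CorePoly w)
    (hy : y ∈ CorePoly w) : (fun i => (x i + y i) / 2) ∈ CorePoly w := by
  constructor
  · intro i
    have := hx.1 i
    have := hy.1 i
    positivity
  · intro S
    have h1 := hx.2 S
    have h2 := hy.2 S
    have h3 : ∑ i ∈ Finset.univ \ S, (x i + y i) / 2
        = (∑ i ∈ Finset.univ \ S, x i + ∑ i ∈ Finset.univ \ S, y i) / 2 := by
      rw [← Finset.sum_add_distrib, Finset.sum_div]
    linarith

end Core

end BLOaux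

/-- The core of a CA contains exactly one leximin-optimal element, and it is Pareto optimal. -/
theorem blo_exists_unique_pareto (n m : ℕ) (v : Fin n → Finset (Fin m) → ℝ)
    (hv0 : ∀ i, v i ∅ = 0) (hvnn : ∀ i S, 0 ≤ v i S) :
    (∃! π : Fin n → ℝ,
        π ∈ CorePoly (coalW v) ∧ ∀ π' ∈ CorePoly (coalW v), ¬ LexDom π' π) ∧
    ∀ π : Fin n → ℝ,
      (π ∈ CorePoly (coalW v) ∧ ∀ π' ∈ CorePoly (coalW v), ¬ LexDom π' π) →
      ¬ ∃ π' ∈ CorePoly (coalW v), (∀ i, π i ≤ π' i) ∧ ∃ j, π j < π' j := by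
  classical
  set U := CorePoly (coalW v) with hU
  have hUc : IsCompact U := BLOaux.core_compact v hv0
  have hUne : U.Nonempty := ⟨0, BLOaux.zero_mem_core v hv0⟩
  obtain ⟨π, hπU, hπopt⟩ := BLOaux.exists_opt U hUc hUne
  constructor
  · refine ⟨π, ⟨hπU, hπopt⟩, ?_⟩
    rintro ρ ⟨hρU, hρopt⟩
    rcases BLOaux.trichotomy ρ π with hs | hd | hd
    · by_contra hne
      exact hρopt _ (BLOaux.core_mid _ hρU hπU) (BLOaux.lexdom_mid ρ π hs hne)
    · exact absurd hd (hπopt ρ hρU)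
    · exact absurd hd (hρopt π hπU)
  · rintro ρ ⟨hρU, hρopt⟩ ⟨π', hπ'U, hle, j0, hlt⟩
    have hmono : ∀ k, sortVec ρ k ≤ sortVec π' k := BLOaux.sortVec_le_sortVec hle
    rcases BLOaux.trichotomy π' ρ with hs | hd | hd
    · have hsum : ∑ i, π' i = ∑ i, ρ i := by
        rw [← BLOaux.sum_sortVec π', ← BLOaux.sum_sortVec ρ, hs]
      have hstrict : ∑ i, ρ i < ∑ i, π' i :=
        Finset.sum_lt_sum (fun i _ => hle i) ⟨j0, Finset.mem_univ j0, hlt⟩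
      linarith
    · exact hρopt π' hπ'U hd
    · obtain ⟨k, _, hk⟩ := hd
      exact absurd hk (not_lt.mpr (hmono k))
end

section
/- Consider a combinatorial auction with nonempty winner set W, and let π^BLO be the leximin-optimal element of its core U. Then for every bidder i ∈ N, π^BLO_i ≥ (1/|W|) · π*_i, where π*_i = max{π_i : π ∈ U} is the maximum utility bidder i attains over the core. -/
/-- Order-statistic characterization of the sorted vector. -/
lemma sortVec_le_iff_s9 {n : ℕ} (x : Fin n → ℝ) (k : Fin n) (c : ℝ) :
    sortVec x k ≤ c ↔ (k : ℕ) + 1 ≤ (Finset.univ.filter (fun j => x j ≤ c)).card := by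
  classical
  have hmono : Monotone (sortVec x) := Tuple.monotone_sort x
  have hcard : (Finset.univ.filter (fun j => sortVec x j ≤ c)).card
      = (Finset.univ.filter (fun j => x j ≤ c)).card := by
    apply Finset.card_bij (fun j _ => Tuple.sort x j)
    · intro a ha
      simp only [Finset.mem_filter, Finset.mem_univ, true_and] at ha ⊢
      exact ha
    · intro a _ b _ h
      exact (Tuple.sort x).injective h
    · intro b hb
      refine ⟨(Tuple.sort x).symm b, ?_, by simp⟩
      simp only [Finset.mem_filter, Finset.mem_univ, true_and] at hb ⊢
      simpa [sortVec] using hb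
  rw [← hcard]
  constructor
  · intro h
    have hsub : Finset.Iic k ⊆ Finset.univ.filter (fun j => sortVec x j ≤ c) := by
      intro j hj
      simp only [Finset.mem_Iic] at hj
      simp only [Finset.mem_filter, Finset.mem_univ, true_and]
      exact le_trans (hmono hj) h
    calc (k : ℕ) + 1 = (Finset.Iic k).card := (Fin.card_Iic k).symm
      _ ≤ _ := Finset.card_le_card hsub
  · intro h
    by_contra hc
    push_neg at hc
    have hsub : Finset.univ.filter (fun j => sortVec x j ≤ c) ⊆ Finset.Iio k := by
      intro j hj
      simp only [Finset.mem_filter, Finset.mem_univ, true_and] at hj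
      simp only [Finset.mem_Iio]
      by_contra hjk
      push_neg at hjk
      exact absurd (le_trans (hmono hjk) hj) (not_le.mpr hc)
    have := Finset.card_le_card hsub
    rw [Fin.card_Iio] at this
    omega

/-- If `y` strictly raises coordinate `i` of `x` and only changes coordinates whose
old and new values both exceed `x i` (without increasing them), then `y`
leximin-dominates `x`. -/
lemma lexdom_aux {n : ℕ} (x y : Fin n → ℝ) (i : Fin n) (hi : x i < y i)
    (h : ∀ j, j ≠ i → y j = x j ∨ (x i < x j ∧ x i < y j ∧ y j ≤ x j)) :
    LexDom y x := by
  classical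
  set t := x i with ht
  set A : Finset (Fin n) := Finset.univ.filter (fun j => x j ≤ t) with hA
  have hiA : i ∈ A := by simp [hA]; exact le_of_eq ht.symm
  have hA1 : 1 ≤ A.card := Finset.card_pos.mpr ⟨i, hiA⟩
  have hAn : A.card ≤ n := by
    simpa using Finset.card_le_card (Finset.subset_univ A)
  have ha : ∀ c : ℝ, c ≤ t → ∀ j : Fin n, y j ≤ c → x j ≤ c := by
    intro c hc j hj
    by_cases hji : j = i
    · subst hji; exact absurd (lt_of_lt_of_le hi (le_trans hj hc)) (lt_irrefl _)
    · rcases h j hji with he | ⟨_, h2, _⟩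
      · rwa [he] at hj
      · exact absurd (lt_of_lt_of_le h2 (le_trans hj hc)) (lt_irrefl _)
  have hb : ∀ c : ℝ, ∀ j : Fin n, j ≠ i → x j ≤ c → y j ≤ c := by
    intro c j hji hj
    rcases h j hji with he | ⟨_, _, h3⟩
    · rwa [he]
    · exact le_trans h3 hj
  have hasub : ∀ c : ℝ, c ≤ t →
      Finset.univ.filter (fun j => y j ≤ c) ⊆ Finset.univ.filter (fun j => x j ≤ c) := by
    intro c hc j hj
    simp only [Finset.mem_filter, Finset.mem_univ, true_and] at hj ⊢
    exact ha c hc j hj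
  have hyt : Finset.univ.filter (fun j => y j ≤ t) = A.erase i := by
    ext j
    simp only [Finset.mem_filter, Finset.mem_univ, true_and, Finset.mem_erase, hA]
    constructor
    · intro hj
      have hji : j ≠ i := by
        rintro rfl
        exact absurd (lt_of_lt_of_le hi hj) (lt_irrefl _)
      exact ⟨hji, ha t le_rfl j hj⟩
    · rintro ⟨hji, hj⟩
      exact hb t j hji hj
  have hyt_card : (Finset.univ.filter (fun j => y j ≤ t)).card = A.card - 1 := by
    rw [hyt, Finset.card_erase_of_mem hiA]
  refine ⟨⟨A.card - 1, by omega⟩, ?_, ?_⟩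
  · intro j hj
    have hjlt : (j : ℕ) < A.card - 1 := hj
    have hjA : (j : ℕ) + 2 ≤ A.card := by omega
    have hyjt : sortVec y j ≤ t := by
      rw [sortVec_le_iff_s9, hyt_card]; omega
    have h1 : sortVec x j ≤ sortVec y j := by
      rw [sortVec_le_iff_s9]
      have := (sortVec_le_iff_s9 y j (sortVec y j)).mp le_rfl
      calc (j : ℕ) + 1 ≤ _ := this
        _ ≤ _ := Finset.card_le_card (hasub _ hyjt)
    have h2 : sortVec y j ≤ sortVec x j := by
      set c := sortVec x j with hc
      have hxc : (j : ℕ) + 1 ≤ (Finset.univ.filter (fun l => x l ≤ c)).card :=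
        (sortVec_le_iff_s9 x j c).mp le_rfl
      rw [sortVec_le_iff_s9]
      by_cases hct : c < t
      · have hsub : Finset.univ.filter (fun l => x l ≤ c)
            ⊆ Finset.univ.filter (fun l => y l ≤ c) := by
          intro l hl
          simp only [Finset.mem_filter, Finset.mem_univ, true_and] at hl ⊢
          have hli : l ≠ i := by
            rintro rfl
            exact absurd (lt_of_le_of_lt hl hct) (lt_irrefl _)
          exact hb c l hli hl
        exact le_trans hxc (Finset.card_le_card hsub)
      · push_neg at hct
        have hsub : A.erase i ⊆ Finset.univ.filter (fun l => y l ≤ c) := by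
          intro l hl
          simp only [Finset.mem_erase, Finset.mem_filter, Finset.mem_univ, true_and, hA] at hl ⊢
          exact hb c l hl.1 (le_trans hl.2 hct)
        have := Finset.card_le_card hsub
        rw [Finset.card_erase_of_mem hiA] at this
        omega
    exact le_antisymm h2 h1
  · have hx : sortVec x ⟨A.card - 1, by omega⟩ ≤ t := by
      rw [sortVec_le_iff_s9, ← hA]
      show A.card - 1 + 1 ≤ A.card
      omega
    have hy : ¬ sortVec y ⟨A.card - 1, by omega⟩ ≤ t := by
      rw [sortVec_le_iff_s9, hyt_card]
      show ¬ (A.card - 1 + 1 ≤ A.card - 1)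
      omega
    exact lt_of_le_of_lt hx (not_le.mp hy)

lemma coalW_bddAbove {n m : ℕ} (v : Fin n → Finset (Fin m) → ℝ) (S : Finset (Fin n)) :
    BddAbove (Set.image (fun a : Fin n → Finset (Fin m) => ∑ i ∈ S, v i (a i))
      {a | IsAlloc S a}) :=
  Set.Finite.bddAbove ((Set.finite_range _).subset (Set.image_subset_range _ _))

lemma coalW_nonempty {n m : ℕ} (v : Fin n → Finset (Fin m) → ℝ) (S : Finset (Fin n)) :
    (Set.image (fun a : Fin n → Finset (Fin m) => ∑ i ∈ S, v i (a i))
      {a | IsAlloc S a}).Nonempty :=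
  ⟨_, Set.mem_image_of_mem _ (fun _ _ _ _ _ => Finset.disjoint_empty_left (α := Fin m) ∅ :
    (fun _ => (∅ : Finset (Fin m))) ∈ {a | IsAlloc S a})⟩

lemma coalW_mono {n m : ℕ} (v : Fin n → Finset (Fin m) → ℝ) (hv0 : ∀ i, v i ∅ = 0)
    (hvnn : ∀ i S, 0 ≤ v i S) {S T : Finset (Fin n)} (hST : S ⊆ T) :
    coalW v S ≤ coalW v T := by
  classical
  apply csSup_le (coalW_nonempty v S)
  rintro b ⟨a, haS, rfl⟩
  set a' : Fin n → Finset (Fin m) := fun j => if j ∈ S then a j else ∅ with ha'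
  have halloc : IsAlloc T a' := by
    intro i hi j hj hij
    by_cases hiS : i ∈ S <;> by_cases hjS : j ∈ S <;>
      simp only [ha', hiS, hjS, if_pos, if_neg, if_true, if_false]
    · exact haS i hiS j hjS hij
    · exact Finset.disjoint_empty_right _
    · exact Finset.disjoint_empty_left _
    · exact Finset.disjoint_empty_left _
  have h1 : ∑ i ∈ S, v i (a i) = ∑ i ∈ S, v i (a' i) := by
    apply Finset.sum_congr rfl
    intro j hj
    simp [ha', hj]
  have h2 : ∑ i ∈ S, v i (a' i) ≤ ∑ i ∈ T, v i (a' i) :=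
    Finset.sum_le_sum_of_subset_of_nonneg hST (fun j _ _ => hvnn j _)
  show ∑ i ∈ S, v i (a i) ≤ coalW v T
  rw [h1]
  exact le_trans h2 (le_csSup (coalW_bddAbove v T) (Set.mem_image_of_mem _ halloc))

/-- In the BLO outcome, each bidder gets at least a 1/|W| fraction of his maximum core utility. -/
theorem blo_single_utility_bound (n m : ℕ) (v : Fin n → Finset (Fin m) → ℝ)
    (hv0 : ∀ i, v i ∅ = 0) (hvnn : ∀ i S, 0 ≤ v i S)
    (hW : (winners v).Nonempty)
    (πB : Fin n → ℝ)
    (hBmem : πB ∈ CorePoly (coalW v))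
    (hBopt : ∀ π' ∈ CorePoly (coalW v), ¬ LexDom π' πB) :
    ∀ i : Fin n,
      (1 / ((winners v).card : ℝ)) *
          sSup (Set.image (fun π : Fin n → ℝ => π i) (CorePoly (coalW v))) ≤ πB i := by
  classical
  intro i
  obtain ⟨hBnn, hBc⟩ := hBmem
  have hBmem' : πB ∈ CorePoly (coalW v) := ⟨hBnn, hBc⟩
  -- core constraint at singletons
  have hcons : ∀ π ∈ CorePoly (coalW v), ∀ j : Fin n,
      π j ≤ coalW v Finset.univ - coalW v (Finset.univ \ {j}) := by
    intro π hπ j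
    have h := hπ.2 (Finset.univ \ {j})
    rwa [sdiff_sdiff_right_self, Finset.inf_eq_inter, Finset.univ_inter,
      Finset.sum_singleton] at h
  -- nonwinners get zero in every core element
  have hzero : ∀ π ∈ CorePoly (coalW v), ∀ j, j ∉ winners v → π j = 0 := by
    intro π hπ j hj
    have h1 : ¬ coalW v (Finset.univ \ {j}) < coalW v Finset.univ := by
      simpa [winners, Finset.mem_filter] using hj
    have h2 : π j ≤ 0 := le_trans (hcons π hπ j) (by linarith [not_lt.mp h1])
    exact le_antisymm h2 (hπ.1 j)
  set c : ℝ := ((winners v).card : ℝ) with hcdef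
  have hc1 : 1 ≤ (winners v).card := Finset.card_pos.mpr hW
  have hcpos : (0 : ℝ) < c := by
    simp only [hcdef]
    exact_mod_cast hc1
  set t : ℝ := πB i with htdef
  have htnn : 0 ≤ t := hBnn i
  -- Main claim
  have hmain : coalW v Finset.univ - coalW v (Finset.univ \ {i}) ≤ c * t := by
    by_contra hcon
    push_neg at hcon
    set f : ℝ := coalW v Finset.univ - coalW v (Finset.univ \ {i}) with hfdef
    have hfpos : 0 < f := lt_of_le_of_lt (by positivity) hcon
    have hiW : i ∈ winners v := by
      simp only [winners, Finset.mem_filter, Finset.mem_univ, true_and]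
      linarith
    set ε : ℝ := (f - c * t) / c with hεdef
    have hεpos : 0 < ε := div_pos (by linarith) hcpos
    have hkey : c * (t + ε) = f := by
      field_simp [hεdef]
      rw [hεdef, mul_add, mul_div_cancel₀ (f - c * t) hcpos.ne']; ring
    have htε : 0 ≤ t + ε := by linarith
    set y : Fin n → ℝ := fun j => if j = i then t + ε else min (πB j) (t + ε) with hydef
    have hymem : y ∈ CorePoly (coalW v) := by
      constructor
      · intro j
        by_cases hji : j = i
        · simp [hydef, hji, htε]
        · simp only [hydef, hji, if_neg, if_false]
          exact le_min (hBnn j) htε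
      · intro S
        by_cases hiS : i ∈ S
        · refine le_trans (Finset.sum_le_sum ?_) (hBc S)
          intro j hj
          have hji : j ≠ i := by
            intro hji
            rw [Finset.mem_sdiff] at hj
            exact hj.2 (hji ▸ hiS)
          simp only [hydef, hji, if_neg, if_false]
          exact min_le_left _ _
        · have hyle : ∀ j, y j ≤ t + ε := by
            intro j
            by_cases hji : j = i
            · simp [hydef, hji]
            · simp only [hydef, hji, if_neg, if_false]
              exact min_le_right _ _
          have hyzero : ∀ j, j ∉ winners v → y j = 0 := by
            intro j hj
            have hji : j ≠ i := fun h => hj (h ▸ hiW)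
            simp only [hydef, hji, if_neg, if_false]
            rw [hzero πB hBmem' j hj]
            exact min_eq_left htε
          have hstep : ∑ j ∈ Finset.univ \ S, y j
              = ∑ j ∈ (Finset.univ \ S) ∩ winners v, y j := by
            symm
            apply Finset.sum_subset (Finset.inter_subset_left)
            intro j hj hj2
            apply hyzero
            intro hjW
            exact hj2 (Finset.mem_inter.mpr ⟨hj, hjW⟩)
          have hbound : ∑ j ∈ (Finset.univ \ S) ∩ winners v, y j ≤ c * (t + ε) := by
            calc ∑ j ∈ (Finset.univ \ S) ∩ winners v, y j
                ≤ ∑ _j ∈ (Finset.univ \ S) ∩ winners v, (t + ε) :=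
                  Finset.sum_le_sum (fun j _ => hyle j)
              _ = (((Finset.univ \ S) ∩ winners v).card : ℝ) * (t + ε) := by
                  rw [Finset.sum_const, nsmul_eq_mul]
              _ ≤ c * (t + ε) := by
                  apply mul_le_mul_of_nonneg_right _ htε
                  simp only [hcdef]
                  exact_mod_cast Finset.card_le_card Finset.inter_subset_right
          have hwmono : coalW v S ≤ coalW v (Finset.univ \ {i}) := by
            apply coalW_mono v hv0 hvnn
            rw [Finset.subset_sdiff]
            exact ⟨Finset.subset_univ S, by simpa using hiS⟩
          calc ∑ j ∈ Finset.univ \ S, y j ≤ c * (t + ε) := by rw [hstep]; exact hbound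
            _ = f := hkey
            _ ≤ coalW v Finset.univ - coalW v S := by
                rw [hfdef]; linarith
    have hlex : LexDom y πB := by
      apply lexdom_aux πB y i
      · simp only [hydef, if_pos, ← htdef]
        linarith
      · intro j hji
        simp only [hydef, hji, if_neg, if_false, ← htdef]
        by_cases hle : πB j ≤ t + ε
        · left
          exact min_eq_left hle
        · right
          push_neg at hle
          rw [min_eq_right (le_of_lt hle)]
          exact ⟨by linarith, by linarith, le_of_lt hle⟩
    exact hBopt y hymem hlex
  -- conclude
  have hsup : sSup (Set.image (fun π : Fin n → ℝ => π i) (CorePoly (coalW v))) ≤ c * t := by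
    refine csSup_le ⟨πB i, ⟨πB, hBmem', rfl⟩⟩ ?_
    rintro z ⟨π, hπ, rfl⟩
    exact le_trans (hcons π hπ i) hmain
  have hfinal := mul_le_mul_of_nonneg_left hsup (by positivity : (0:ℝ) ≤ 1 / c)
  calc (1 / c) * sSup (Set.image (fun π : Fin n → ℝ => π i) (CorePoly (coalW v)))
      ≤ (1 / c) * (c * t) := hfinal
    _ = t := by field_simp
end

section
/- The bound π^BLO_i ≥ (1/|W|) · π*_i is tight: for every integer k ≥ 2 there exists a combinatorial auction with winner set W of size k and a winner i ∈ W such that π*_i = max{π_i : π ∈ U} > 0 and the leximin-optimal element π^BLO of the core U satisfies π^BLO_i = π*_i / k. -/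
namespace BLOTight

open Finset

/-- Bidder 0 values the grand bundle at `k-1`; bidder `i ≠ 0` values bundles
containing item `i-1` at `1`. -/
noncomputable def V (k : ℕ) : Fin (k+1) → Finset (Fin k) → ℝ :=
  fun i B => if h : i = 0 then (if B = Finset.univ then (k:ℝ) - 1 else 0)
             else (if i.pred h ∈ B then 1 else 0)

variable {k : ℕ}

lemma V_nonneg (hk : 2 ≤ k) (i : Fin (k+1)) (B : Finset (Fin k)) : 0 ≤ V k i B := by
  have hkR : (2:ℝ) ≤ (k:ℝ) := by exact_mod_cast hk
  unfold V
  split_ifs <;> first | linarith | norm_num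

lemma V_empty (hk : 2 ≤ k) (i : Fin (k+1)) : V k i ∅ = 0 := by
  have h : (∅ : Finset (Fin k)) ≠ Finset.univ := by
    haveI : NeZero k := ⟨by omega⟩
    exact (Finset.univ_nonempty).ne_empty.symm
  unfold V
  split_ifs with h1 h2 <;> simp_all

lemma one_ne_zero' (hk : 2 ≤ k) : (1 : Fin (k+1)) ≠ 0 := by
  have h : ((1:Fin (k+1)) : ℕ) = 1 := by
    rw [Fin.val_one' (k+1), Nat.mod_eq_of_lt (by omega)]
  intro hc
  rw [hc] at h
  simp at h

lemma sum_ind (s : Finset (Fin (k+1))) (c : ℝ) :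
    ∑ j ∈ s, (if j = 0 then 0 else c) = ((s.erase 0).card : ℝ) * c := by
  rw [← Finset.sum_erase s (f := fun j => if j = 0 then (0:ℝ) else c) (a := 0) (by simp)]
  rw [Finset.sum_congr rfl (fun j hj => if_neg (Finset.ne_of_mem_erase hj))]
  simp [mul_comm]

lemma sum_alloc_le (hk : 2 ≤ k) (S : Finset (Fin (k+1))) (a : Fin (k+1) → Finset (Fin k))
    (ha : IsAlloc S a) :
    ∑ i ∈ S, V k i (a i) ≤ max ((k:ℝ) - 1) ((S.erase 0).card : ℝ) := by
  by_cases h0 : 0 ∈ S ∧ a 0 = Finset.univ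
  · obtain ⟨h0S, h0a⟩ := h0
    rw [← Finset.sum_erase_add S _ h0S]
    have h1 : ∀ j ∈ S.erase 0, V k j (a j) = 0 := by
      intro j hj
      obtain ⟨hj0, hjS⟩ := Finset.mem_erase.mp hj
      have hd := ha j hjS 0 h0S hj0
      rw [h0a] at hd
      have he : a j = ∅ := by
        have := Finset.disjoint_iff_inter_eq_empty.mp hd
        rwa [Finset.inter_univ] at this
      simp [V, hj0, he]
    rw [Finset.sum_eq_zero h1, zero_add]
    have h2 : V k 0 (a 0) = (k:ℝ) - 1 := by simp [V, h0a]
    rw [h2]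
    exact le_max_left _ _
  · refine le_trans ?_ (le_max_right _ _)
    calc ∑ i ∈ S, V k i (a i) ≤ ∑ i ∈ S, (if i = 0 then 0 else (1:ℝ)) := by
          apply Finset.sum_le_sum
          intro i hi
          by_cases hi0 : i = 0
          · subst hi0
            have hne : a 0 ≠ Finset.univ := fun hc => h0 ⟨hi, hc⟩
            simp [V, hne]
          · simp only [V, dif_neg hi0, if_neg hi0]
            split <;> norm_num
      _ = ((S.erase 0).card : ℝ) := by rw [sum_ind]; ring

lemma bddAbove_alloc (hk : 2 ≤ k) (S : Finset (Fin (k+1))) :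
    BddAbove (Set.image (fun a : Fin (k+1) → Finset (Fin k) => ∑ i ∈ S, V k i (a i))
      {a | IsAlloc S a}) := by
  refine ⟨max ((k:ℝ) - 1) ((S.erase 0).card : ℝ), ?_⟩
  rintro x ⟨a, ha, rfl⟩
  exact sum_alloc_le hk S a ha

lemma coalW_le (hk : 2 ≤ k) (S : Finset (Fin (k+1))) :
    coalW (V k) S ≤ max ((k:ℝ) - 1) ((S.erase 0).card : ℝ) := by
  apply csSup_le
  · exact ⟨0, ⟨fun _ => ∅, fun i _ j _ _ => by simp, by simp [V_empty hk]⟩⟩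
  · rintro x ⟨a, ha, rfl⟩
    exact sum_alloc_le hk S a ha

lemma coalW_ge (hk : 2 ≤ k) {S : Finset (Fin (k+1))} {a : Fin (k+1) → Finset (Fin k)}
    (ha : IsAlloc S a) : ∑ i ∈ S, V k i (a i) ≤ coalW (V k) S :=
  le_csSup (bddAbove_alloc hk S) ⟨a, ha, rfl⟩

/-- The allocation giving each nonzero bidder its own item. -/
noncomputable def alloc1 (k : ℕ) : Fin (k+1) → Finset (Fin k) :=
  fun i => if h : i = 0 then ∅ else {i.pred h}

lemma isAlloc_alloc1 (S : Finset (Fin (k+1))) : IsAlloc S (alloc1 k) := by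
  intro i _ j _ hij
  unfold alloc1
  split_ifs <;> simp_all [Finset.disjoint_singleton, Fin.pred_inj]

lemma V_alloc1 (hk : 2 ≤ k) (i : Fin (k+1)) :
    V k i (alloc1 k i) = if i = 0 then 0 else 1 := by
  by_cases h : i = 0
  · subst h
    simp only [alloc1, dif_pos rfl, if_pos rfl]
    exact V_empty hk 0
  · simp [V, alloc1, h]

lemma card_univ_erase : ((Finset.univ : Finset (Fin (k+1))).erase 0).card = k := by
  rw [Finset.card_erase_of_mem (Finset.mem_univ 0)]
  simp

lemma coalW_univ (hk : 2 ≤ k) : coalW (V k) Finset.univ = (k:ℝ) := by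
  have hkR : (2:ℝ) ≤ (k:ℝ) := by exact_mod_cast hk
  apply le_antisymm
  · refine (coalW_le hk _).trans ?_
    rw [card_univ_erase]
    exact max_le (by linarith) le_rfl
  · have h := coalW_ge hk (isAlloc_alloc1 (k := k) Finset.univ)
    calc (k:ℝ) = ∑ i : Fin (k+1), V k i (alloc1 k i) := by
          rw [Finset.sum_congr rfl (fun i _ => V_alloc1 hk i), sum_ind, card_univ_erase, mul_one]
      _ ≤ _ := h

lemma coalW_compl_zero_ge (hk : 2 ≤ k) :
    (k:ℝ) ≤ coalW (V k) (Finset.univ \ {0}) := by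
  have h := coalW_ge hk (isAlloc_alloc1 (k := k) (Finset.univ \ {0}))
  calc (k:ℝ) = ∑ i ∈ Finset.univ \ {0}, V k i (alloc1 k i) := by
        rw [Finset.sum_congr rfl (fun i _ => V_alloc1 hk i), Finset.sdiff_singleton_eq_erase,
          sum_ind, Finset.erase_idem, card_univ_erase, mul_one]
    _ ≤ _ := h

lemma coalW_single_zero_ge (hk : 2 ≤ k) :
    (k:ℝ) - 1 ≤ coalW (V k) {0} := by
  have ha : IsAlloc ({0} : Finset (Fin (k+1))) (fun _ => (Finset.univ : Finset (Fin k))) := by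
    intro i hi j hj hij
    rw [Finset.mem_singleton] at hi hj
    exact (hij (hi.trans hj.symm)).elim
  have h := coalW_ge hk ha
  calc (k:ℝ) - 1 = ∑ i ∈ ({0} : Finset (Fin (k+1))), V k i Finset.univ := by
        rw [Finset.sum_singleton]; simp [V]
    _ ≤ _ := h

/-- The allocation used for the coalition `univ \ {1}`. -/
noncomputable def alloc2 (k : ℕ) : Fin (k+1) → Finset (Fin k) :=
  fun i => if h : i = 0 then ∅ else if i = 1 then ∅ else {i.pred h}

lemma isAlloc_alloc2 (S : Finset (Fin (k+1))) : IsAlloc S (alloc2 k) := by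
  intro i _ j _ hij
  unfold alloc2
  split_ifs <;> simp_all [Finset.disjoint_singleton, Fin.pred_inj]

lemma coalW_compl_one_ge (hk : 2 ≤ k) :
    (k:ℝ) - 1 ≤ coalW (V k) (Finset.univ \ {1}) := by
  have h := coalW_ge hk (isAlloc_alloc2 (k := k) (Finset.univ \ {1}))
  have hval : ∀ i ∈ Finset.univ \ ({1} : Finset (Fin (k+1))),
      V k i (alloc2 k i) = if i = 0 then 0 else 1 := by
    intro i hi
    have hi1 : i ≠ 1 := by
      rw [Finset.mem_sdiff, Finset.mem_singleton] at hi
      exact hi.2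
    by_cases h0 : i = 0
    · subst h0
      simp only [alloc2, dif_pos rfl, if_pos rfl]
      exact V_empty hk 0
    · simp [V, alloc2, h0, hi1]
  have hcard : (((Finset.univ \ ({1} : Finset (Fin (k+1)))).erase 0).card : ℝ) = (k:ℝ) - 1 := by
    rw [Finset.sdiff_singleton_eq_erase, Finset.card_erase_of_mem
      (Finset.mem_erase.mpr ⟨(one_ne_zero' hk).symm, Finset.mem_univ 0⟩),
      Finset.card_erase_of_mem (Finset.mem_univ 1), Finset.card_univ, Fintype.card_fin]
    have h2 : k + 1 - 1 - 1 = k - 1 := by omega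
    rw [h2, Nat.cast_sub (by omega : 1 ≤ k), Nat.cast_one]
  calc (k:ℝ) - 1 = ∑ i ∈ Finset.univ \ {1}, V k i (alloc2 k i) := by
        rw [Finset.sum_congr rfl hval, sum_ind, hcard, mul_one]
    _ ≤ _ := h

lemma coalW_compl_ne_zero_le (hk : 2 ≤ k) {i : Fin (k+1)} (hi : i ≠ 0) :
    coalW (V k) (Finset.univ \ {i}) ≤ (k:ℝ) - 1 := by
  refine (coalW_le hk _).trans ?_
  have hcard : (((Finset.univ \ ({i} : Finset (Fin (k+1)))).erase 0).card : ℝ) ≤ (k:ℝ) - 1 := by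
    rw [Finset.sdiff_singleton_eq_erase, Finset.card_erase_of_mem
      (Finset.mem_erase.mpr ⟨hi.symm, Finset.mem_univ 0⟩),
      Finset.card_erase_of_mem (Finset.mem_univ i), Finset.card_univ, Fintype.card_fin]
    have : k + 1 - 1 - 1 = k - 1 := by omega
    rw [this]
    push_cast [Nat.cast_sub (by omega : 1 ≤ k)]
    linarith
  exact max_le le_rfl hcard

lemma winners_eq (hk : 2 ≤ k) : winners (V k) = (Finset.univ : Finset (Fin (k+1))).erase 0 := by
  have hkR : (2:ℝ) ≤ (k:ℝ) := by exact_mod_cast hk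
  ext i
  rw [winners, Finset.mem_filter, Finset.mem_erase]
  constructor
  · rintro ⟨_, hlt⟩
    refine ⟨?_, Finset.mem_univ i⟩
    intro h0
    subst h0
    have h1 := coalW_compl_zero_ge hk
    rw [coalW_univ hk] at hlt
    linarith
  · rintro ⟨hi0, _⟩
    refine ⟨Finset.mem_univ i, ?_⟩
    have h1 := coalW_compl_ne_zero_le hk hi0
    rw [coalW_univ hk]
    linarith

/-- Auxiliary facts about core elements. -/
lemma core_zero (hk : 2 ≤ k) {π : Fin (k+1) → ℝ} (hπ : π ∈ CorePoly (coalW (V k))) :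
    π 0 = 0 := by
  obtain ⟨hpos, hcon⟩ := hπ
  have h := hcon (Finset.univ \ {0})
  rw [Finset.sdiff_sdiff_self_left, Finset.univ_inter, Finset.sum_singleton,
    coalW_univ hk] at h
  have h2 := coalW_compl_zero_ge hk
  have := hpos 0
  linarith

lemma core_sum_le_one (hk : 2 ≤ k) {π : Fin (k+1) → ℝ} (hπ : π ∈ CorePoly (coalW (V k))) :
    ∑ j : Fin (k+1), π j ≤ 1 := by
  obtain ⟨hpos, hcon⟩ := hπ
  have h := hcon {0}
  rw [coalW_univ hk] at h
  have h2 := coalW_single_zero_ge hk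
  have h0 := core_zero hk ⟨hpos, hcon⟩
  have hsum : ∑ j ∈ (Finset.univ : Finset (Fin (k+1))).erase 0, π j + π 0
      = ∑ j : Fin (k+1), π j := Finset.sum_erase_add _ _ (Finset.mem_univ 0)
  rw [Finset.sdiff_singleton_eq_erase] at h
  linarith

lemma core_one_le_one (hk : 2 ≤ k) {π : Fin (k+1) → ℝ} (hπ : π ∈ CorePoly (coalW (V k))) :
    π 1 ≤ 1 := by
  obtain ⟨hpos, hcon⟩ := hπ
  have h := hcon (Finset.univ \ {1})
  rw [Finset.sdiff_sdiff_self_left, Finset.univ_inter, Finset.sum_singleton,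
    coalW_univ hk] at h
  have h2 := coalW_compl_one_ge hk
  linarith

/-- The indicator of bidder 1 is in the core. -/
lemma e1_mem (hk : 2 ≤ k) :
    (fun j : Fin (k+1) => if j = 1 then (1:ℝ) else 0) ∈ CorePoly (coalW (V k)) := by
  have hkR : (2:ℝ) ≤ (k:ℝ) := by exact_mod_cast hk
  constructor
  · intro i; dsimp only; split_ifs <;> norm_num
  · intro S
    rw [coalW_univ hk, Finset.sum_ite_eq']
    by_cases h1 : (1 : Fin (k+1)) ∈ Finset.univ \ S
    · rw [if_pos h1]
      rw [Finset.mem_sdiff] at h1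
      have hsub : S.erase 0 ⊆ ((Finset.univ : Finset (Fin (k+1))).erase 0).erase 1 := by
        intro x hx
        rw [Finset.mem_erase] at hx
        rw [Finset.mem_erase, Finset.mem_erase]
        refine ⟨?_, hx.1, Finset.mem_univ x⟩
        intro hx1; subst hx1; exact h1.2 hx.2
      have hcard : (S.erase 0).card ≤ k - 1 := by
        have := Finset.card_le_card hsub
        rw [Finset.card_erase_of_mem (Finset.mem_erase.mpr ⟨one_ne_zero' hk,
          Finset.mem_univ 1⟩), card_univ_erase] at this
        omega
      have hcR : ((S.erase 0).card : ℝ) ≤ (k:ℝ) - 1 := by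
        calc ((S.erase 0).card : ℝ) ≤ ((k - 1 : ℕ) : ℝ) := by exact_mod_cast hcard
          _ = (k:ℝ) - 1 := by push_cast [Nat.cast_sub (by omega : 1 ≤ k)]; ring
      have := (coalW_le hk S).trans (max_le le_rfl hcR)
      linarith
    · rw [if_neg h1]
      have hcR : ((S.erase 0).card : ℝ) ≤ (k:ℝ) := by
        have : (S.erase 0).card ≤ k := by
          have := Finset.card_le_card (Finset.erase_subset_erase 0 (Finset.subset_univ S))
          rwa [card_univ_erase] at this
        exact_mod_cast this
      have := (coalW_le hk S).trans (max_le (by linarith) hcR)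
      linarith

lemma sSup_eq_one (hk : 2 ≤ k) :
    sSup (Set.image (fun π : Fin (k+1) → ℝ => π 1) (CorePoly (coalW (V k)))) = 1 := by
  apply le_antisymm
  · apply csSup_le
    · exact ⟨1, ⟨_, e1_mem hk, by simp⟩⟩
    · rintro x ⟨π, hπ, rfl⟩
      exact core_one_le_one hk hπ
  · refine le_csSup ⟨1, ?_⟩ ⟨_, e1_mem hk, by simp⟩
    rintro x ⟨π, hπ, rfl⟩
    exact core_one_le_one hk hπ

/-- The leximin-optimal core element. -/
noncomputable def piB (k : ℕ) : Fin (k+1) → ℝ := fun i => if i = 0 then 0 else 1/(k:ℝ)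

lemma piB_mem (hk : 2 ≤ k) : piB k ∈ CorePoly (coalW (V k)) := by
  have hkR : (2:ℝ) ≤ (k:ℝ) := by exact_mod_cast hk
  have hk0 : (0:ℝ) < (k:ℝ) := by linarith
  constructor
  · intro i
    dsimp only [piB]
    split_ifs <;> positivity
  · intro S
    rw [coalW_univ hk]
    unfold piB
    rw [sum_ind]
    set e := (S.erase 0).card with he
    have heq : (Finset.univ \ S).erase 0 = ((Finset.univ : Finset (Fin (k+1))).erase 0) \ (S.erase 0) := by
      ext x
      simp only [Finset.mem_erase, Finset.mem_sdiff, Finset.mem_univ, true_and]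
      tauto
    have hsub : S.erase 0 ⊆ (Finset.univ : Finset (Fin (k+1))).erase 0 :=
      Finset.erase_subset_erase 0 (Finset.subset_univ S)
    have hcard : ((Finset.univ \ S).erase 0).card = k - e := by
      rw [heq, Finset.card_sdiff_of_subset hsub, card_univ_erase]
    have hek : e ≤ k := by
      have := Finset.card_le_card hsub
      rwa [card_univ_erase] at this
    rw [hcard]
    have hW := coalW_le hk S
    rw [← he] at hW
    rcases eq_or_lt_of_le hek with heqk | hlt
    · rw [heqk]
      simp only [Nat.sub_self, Nat.cast_zero, zero_mul]
      have : coalW (V k) S ≤ (k:ℝ) := hW.trans (max_le (by linarith) (by rw [heqk])) 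
      linarith
    · have heR : ((e:ℕ) : ℝ) ≤ (k:ℝ) - 1 := by
        have : (e:ℕ) ≤ k - 1 := by omega
        calc ((e:ℕ):ℝ) ≤ ((k-1:ℕ):ℝ) := by exact_mod_cast this
          _ = (k:ℝ) - 1 := by push_cast [Nat.cast_sub (by omega : 1 ≤ k)]; ring
      have hWle : coalW (V k) S ≤ (k:ℝ) - 1 := hW.trans (max_le le_rfl heR)
      have hdR : (((k - e : ℕ)):ℝ) ≤ (k:ℝ) := by
        have : (k - e : ℕ) ≤ k := Nat.sub_le _ _
        exact_mod_cast (Nat.cast_le.mpr this : ((k-e:ℕ):ℝ) ≤ (k:ℝ))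
      have hLHS : (((k - e : ℕ)):ℝ) * (1/(k:ℝ)) ≤ 1 := by
        rw [mul_one_div, div_le_one hk0]
        exact hdR
      linarith

lemma sum_piB (hk : 2 ≤ k) : ∑ j : Fin (k+1), piB k j = 1 := by
  have hk0 : (0:ℝ) < (k:ℝ) := by
    have : (0:ℕ) < k := by omega
    exact_mod_cast this
  unfold piB
  rw [sum_ind, card_univ_erase]
  field_simp

lemma sortVec_zero_le {n : ℕ} (x : Fin (n+1) → ℝ) (i : Fin (n+1)) : sortVec x 0 ≤ x i := by
  have h := Tuple.monotone_sort x (Fin.zero_le ((Tuple.sort x)⁻¹ i))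
  simpa [sortVec, Function.comp] using h

lemma sum_sortVec {n : ℕ} (x : Fin n → ℝ) : ∑ j, sortVec x j = ∑ j, x j := by
  simp only [sortVec, Function.comp]
  exact Equiv.sum_comp (Tuple.sort x) x

lemma sortVec_piB (hk : 2 ≤ k) (j : Fin (k+1)) :
    sortVec (piB k) j = if j = 0 then 0 else 1/(k:ℝ) := by
  have hk0 : (0:ℝ) < (k:ℝ) := by
    have : (0:ℕ) < k := by omega
    exact_mod_cast this
  have hσ0 : Tuple.sort (piB k) 0 = 0 := by
    by_contra hne
    have h1 : sortVec (piB k) 0 = 1/(k:ℝ) := by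
      simp [sortVec, Function.comp, piB, hne]
    have h2 : sortVec (piB k) 0 ≤ piB k 0 := sortVec_zero_le _ 0
    rw [h1, show piB k 0 = 0 from if_pos rfl] at h2
    have : (0:ℝ) < 1/(k:ℝ) := by positivity
    linarith
  by_cases hj : j = 0
  · subst hj
    simp [sortVec, Function.comp, hσ0, piB]
  · have hne : Tuple.sort (piB k) j ≠ 0 := by
      intro hc
      exact hj ((Tuple.sort (piB k)).injective (hc.trans hσ0.symm))
    simp [sortVec, Function.comp, piB, hne, hj]

lemma no_lexdom (hk : 2 ≤ k) (π' : Fin (k+1) → ℝ)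
    (hπ' : π' ∈ CorePoly (coalW (V k))) : ¬ LexDom π' (piB k) := by
  have hk0 : (0:ℝ) < (k:ℝ) := by
    have : (0:ℕ) < k := by omega
    exact_mod_cast this
  rintro ⟨t, hEq, hLt⟩
  by_cases ht : t = 0
  · subst ht
    rw [sortVec_piB hk 0, if_pos rfl] at hLt
    have h1 : sortVec π' 0 ≤ π' 0 := sortVec_zero_le π' 0
    have h2 : π' 0 = 0 := core_zero hk hπ'
    linarith
  · have h0lt : (0 : Fin (k+1)) < t := Fin.pos_iff_ne_zero.mpr ht
    have hs0 : sortVec π' 0 = 0 := by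
      rw [hEq 0 h0lt, sortVec_piB hk 0, if_pos rfl]
    have hLt' : 1/(k:ℝ) < sortVec π' t := by
      rwa [sortVec_piB hk t, if_neg ht] at hLt
    have hsum : ∑ j : Fin (k+1), piB k j < ∑ j : Fin (k+1), sortVec π' j := by
      apply Finset.sum_lt_sum
      · intro j _
        rcases eq_or_ne j 0 with rfl | hj0
        · rw [hs0]; simp [piB]
        · have hpb : piB k j = 1/(k:ℝ) := if_neg hj0
          rw [hpb]
          rcases lt_or_ge j t with hjt | htj
          · rw [hEq j hjt, sortVec_piB hk j, if_neg hj0]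
          · have := Tuple.monotone_sort π' htj
            have h2 : sortVec π' t ≤ sortVec π' j := this
            linarith
      · refine ⟨t, Finset.mem_univ t, ?_⟩
        rw [show piB k t = 1/(k:ℝ) from if_neg ht]
        exact hLt'
    rw [sum_sortVec, sum_piB hk] at hsum
    have h2 := core_sum_le_one hk hπ'
    linarith

end BLOTight

/-- Tightness of the bound: the BLO utility can be exactly a 1/|W| fraction of the
maximum core utility. -/
theorem blo_single_utility_bound_tight (k : ℕ) (hk : 2 ≤ k) :
    ∃ (n m : ℕ) (v : Fin n → Finset (Fin m) → ℝ),
      (∀ i, v i ∅ = 0) ∧ (∀ i S, 0 ≤ v i S) ∧ (winners v).card = k ∧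
      ∃ i ∈ winners v,
        0 < sSup (Set.image (fun π : Fin n → ℝ => π i) (CorePoly (coalW v))) ∧
        ∃ πB : Fin n → ℝ,
          (πB ∈ CorePoly (coalW v) ∧ ∀ π' ∈ CorePoly (coalW v), ¬ LexDom π' πB) ∧
          πB i = sSup (Set.image (fun π : Fin n → ℝ => π i) (CorePoly (coalW v))) / k := by
  refine ⟨k+1, k, BLOTight.V k, fun i => BLOTight.V_empty hk i,
    fun i S => BLOTight.V_nonneg hk i S, ?_, 1, ?_, ?_, BLOTight.piB k,
    ⟨BLOTight.piB_mem hk, fun π' h => BLOTight.no_lexdom hk π' h⟩, ?_⟩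
  · rw [BLOTight.winners_eq hk, BLOTight.card_univ_erase]
  · rw [BLOTight.winners_eq hk]
    exact Finset.mem_erase.mpr ⟨BLOTight.one_ne_zero' hk, Finset.mem_univ 1⟩
  · rw [BLOTight.sSup_eq_one hk]
    norm_num
  · rw [BLOTight.sSup_eq_one hk]
    show (if (1 : Fin (k+1)) = 0 then (0:ℝ) else 1/(k:ℝ)) = 1 / k
    rw [if_neg (BLOTight.one_ne_zero' hk)]
end

section
/- The bound ∑_i π^BLO_i ≥ (4k / (k² + 2k + (k mod 2))) · ∑_i π^MRC_i is tight: for every integer k ≥ 3 there exists a combinatorial auction with winner set W of size k such that its leximin-optimal core element π^BLO and some maximizer π^MRC of total utility over the core U satisfy ∑_{i∈N} π^BLO_i = (4k / (k² + 2k + (k mod 2))) · ∑_{i∈N} π^MRC_i with ∑_{i∈N} π^MRC_i > 0. -/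
open Finset

namespace BLO

/-- cardinality of an initial segment of `Fin N`. -/
lemma card_filter_lt (N t : ℕ) (h : t ≤ N) :
    (univ.filter fun i : Fin N => (i : ℕ) < t).card = t := by
  have : (univ.filter fun i : Fin N => (i : ℕ) < t)
      = (univ : Finset (Fin t)).map ⟨Fin.castLE h, Fin.castLE_injective h⟩ := by
    ext x
    simp only [mem_filter, mem_univ, true_and, mem_map, Function.Embedding.coeFn_mk]
    constructor
    · intro hx; exact ⟨⟨(x : ℕ), hx⟩, by ext; simp [Fin.castLE]⟩
    · rintro ⟨y, rfl⟩; exact y.isLt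
  rw [this, card_map, card_univ, Fintype.card_fin]

lemma card_filter_not_lt (N t : ℕ) (h : t ≤ N) :
    (univ.filter fun i : Fin N => ¬ (i : ℕ) < t).card = N - t := by
  have h2 := Finset.card_filter_add_card_filter_not
    (s := (univ : Finset (Fin N))) (p := fun i : Fin N => (i : ℕ) < t)
  rw [card_filter_lt N t h] at h2
  simp only [card_univ, Fintype.card_fin] at h2
  omega

/-- transfer of counting along the sorting permutation -/
lemma sortVec_count {N : ℕ} (x : Fin N → ℝ) (p : ℝ → Prop) [DecidablePred p] :
    (univ.filter fun j => p (sortVec x j)).card = (univ.filter fun i => p (x i)).card := by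
  exact Finset.card_equiv (Tuple.sort x) (by intro i; rw [mem_filter, mem_filter]; simp [sortVec])

lemma sortVec_mono {N : ℕ} (x : Fin N → ℝ) : Monotone (sortVec x) :=
  Tuple.monotone_sort x

section Construction

variable (k : ℕ)

def cc : ℕ := k / 2
def LL : ℕ := k - k / 2
def nn : ℕ := k + LL k

def Bdl (i : Fin (nn k)) : Finset (Fin k) :=
  if (i : ℕ) < k then univ.filter (fun x => (x : ℕ) = (i : ℕ))
  else univ.filter (fun x => (x : ℕ) < cc k ∨ (x : ℕ) = cc k + ((i : ℕ) - k))

noncomputable def wt (i : Fin (nn k)) : ℝ :=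
  if (i : ℕ) < k then (cc k : ℝ) + 2 else ((cc k : ℝ) + 1) ^ 2

noncomputable def va (i : Fin (nn k)) (A : Finset (Fin k)) : ℝ :=
  if Bdl k i ⊆ A then wt k i else 0

def Wn : Finset (Fin (nn k)) := univ.filter (fun i => (i : ℕ) < k)
def Mid : Finset (Fin (nn k)) := univ.filter (fun i => cc k ≤ (i : ℕ) ∧ (i : ℕ) < k)
def Cw : Finset (Fin (nn k)) := univ.filter (fun i => (i : ℕ) < cc k)
def TN (t : ℕ) : Finset (Fin (nn k)) :=
  univ.filter (fun i => (i : ℕ) < cc k ∨ (i : ℕ) = cc k + t)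

variable {k} (hk : 3 ≤ k)

lemma k_le_nn : k ≤ nn k := by unfold nn; omega

include hk

lemma cc_lt : cc k < k := by unfold cc; omega
lemma cc_pos : 1 ≤ cc k := by unfold cc; omega
lemma LL_ge : 2 ≤ LL k := by unfold LL; omega
lemma cc_add_LL : cc k + LL k = k := by unfold cc LL; omega

lemma card_Wn : (Wn k).card = k := by
  unfold Wn; rw [card_filter_lt _ _ (k_le_nn (k := k))]

lemma card_Cw : (Cw k).card = cc k := by
  unfold Cw; rw [card_filter_lt]
  have := cc_lt hk; have := k_le_nn (k := k); omega

lemma card_Mid : (Mid k).card = LL k := by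
  have h1 : Mid k = (Wn k) \ (Cw k) := by
    ext i; simp [Mid, Wn, Cw]; omega
  have h2 : Cw k ⊆ Wn k := by
    intro i; simp only [Wn, Cw, mem_filter, mem_univ, true_and]
    have := cc_lt hk; omega
  rw [h1, card_sdiff_of_subset h2, card_Wn hk, card_Cw hk]
  unfold cc LL; omega

lemma TN_eq (t : ℕ) (ht : t < LL k) :
    TN k t = insert ⟨cc k + t, by have := cc_add_LL hk; have := k_le_nn (k := k); omega⟩ (Cw k) := by
  ext i; simp [TN, Cw, Fin.ext_iff]; tauto

lemma card_TN (t : ℕ) (ht : t < LL k) : (TN k t).card = cc k + 1 := by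
  rw [TN_eq hk t ht, card_insert_of_notMem (by simp [Cw]), card_Cw hk]

lemma TN_subset_Wn (t : ℕ) (ht : t < LL k) : TN k t ⊆ Wn k := by
  intro i; simp only [TN, Wn, mem_filter, mem_univ, true_and]
  have h1 := cc_lt hk; have h2 := cc_add_LL hk
  rintro (h | h) <;> omega

omit hk in
lemma Mid_subset_Wn : Mid k ⊆ Wn k := by
  intro i; simp only [Mid, Wn, mem_filter, mem_univ, true_and]; tauto

omit hk in
lemma card_TN_inter_Mid (t : ℕ) : (TN k t ∩ Mid k).card ≤ 1 := by
  apply card_le_one.2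
  intro i hi j hj
  simp only [TN, Mid, mem_inter, mem_filter, mem_univ, true_and] at hi hj
  have h1 : (i : ℕ) = cc k + t := by omega
  have h2 : (j : ℕ) = cc k + t := by omega
  apply Fin.ext; omega

end Construction
section Master

private lemma arith1 (C K p W Z : ℝ) (h1 : p + Z + W ≤ K) (h2 : C + 1 ≤ W + Z)
    (hC : 0 ≤ C) (hW : 0 ≤ W) (hZ : 0 ≤ Z) :
    p * (C + 2) + (C + 1) ^ 2 ≤ K * (C + 2) - W := by
  nlinarith [mul_le_mul_of_nonneg_right h1 (by linarith : (0:ℝ) ≤ C + 2),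
    mul_le_mul_of_nonneg_right h2 (by linarith : (0:ℝ) ≤ C + 1)]

private lemma arith2 (C K p W Z Y : ℝ) (h1 : p + Z + W ≤ K) (h2 : C + 1 ≤ W + Z)
    (h3 : C + Y ≤ W + Z) (hY : 1 ≤ Y)
    (hC : 0 ≤ C) (hW : 0 ≤ W) (hZ : 0 ≤ Z) :
    p * (C + 2) + (C + 1) ^ 2 ≤ K * (C + 2) - (C + 1) * Y := by
  nlinarith [mul_le_mul_of_nonneg_right h1 (by linarith : (0:ℝ) ≤ C + 2),
    mul_le_mul_of_nonneg_right h3 (by linarith : (0:ℝ) ≤ C + 2)]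

private lemma arith0 (C K p W Y : ℝ) (h1 : p + W ≤ K) (h2 : Y ≤ W)
    (hC : 0 ≤ C) (hW : 0 ≤ W) (hY : 0 ≤ Y) (hp : 0 ≤ p) :
    p * (C + 2) ≤ K * (C + 2) - (C + 1) * Y ∧ p * (C + 2) ≤ K * (C + 2) - W := by
  constructor
  · nlinarith [mul_le_mul_of_nonneg_right h1 (by linarith : (0:ℝ) ≤ C + 2)]
  · nlinarith [mul_le_mul_of_nonneg_right h1 (by linarith : (0:ℝ) ≤ C + 2)]

variable {k : ℕ} (hk : 3 ≤ k)

include hk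

lemma Bdl_loser_mem (i : Fin (nn k)) (hi : ¬ (i : ℕ) < k) :
    (⟨0, by omega⟩ : Fin k) ∈ Bdl k i := by
  have hc := cc_pos hk
  simp only [Bdl, if_neg hi, mem_filter, mem_univ, true_and]
  left; omega

omit hk in
lemma Bdl_winner_mem (i : Fin (nn k)) (hi : (i : ℕ) < k) :
    (⟨(i : ℕ), hi⟩ : Fin k) ∈ Bdl k i := by
  simp [Bdl, hi]

lemma master (S : Finset (Fin (nn k))) (a : Fin (nn k) → Finset (Fin k))
    (ha : IsAlloc S a) :
    ∑ i ∈ S, va k i (a i) ≤ k * ((cc k : ℝ) + 2) - ((Wn k \ S).card : ℝ) ∧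
    ∑ i ∈ S, va k i (a i) ≤ k * ((cc k : ℝ) + 2) - ((cc k : ℝ) + 1) * ((Mid k \ S).card : ℝ) := by
  classical
  set c := cc k with hc
  set P := S.filter (fun i => Bdl k i ⊆ a i) with hP
  have hsum : ∑ i ∈ S, va k i (a i) = ∑ i ∈ P, wt k i := by
    rw [hP, Finset.sum_filter]; rfl
  have hdisjB : ∀ i ∈ P, ∀ j ∈ P, i ≠ j → Disjoint (Bdl k i) (Bdl k j) := by
    intro i hi j hj hij
    rw [hP, mem_filter] at hi hj
    exact Finset.disjoint_of_subset_left hi.2 (Finset.disjoint_of_subset_right hj.2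
      (ha i hi.1 j hj.1 hij))
  set PW := Finset.filter (fun i : Fin (nn k) => (i : ℕ) < k) P with hPW
  set PL := Finset.filter (fun i : Fin (nn k) => ¬ (i : ℕ) < k) P with hPL
  have hsplit : ∑ i ∈ P, wt k i = ∑ i ∈ PW, wt k i + ∑ i ∈ PL, wt k i :=
    (Finset.sum_filter_add_sum_filter_not P _ _).symm
  have hPWval : ∑ i ∈ PW, wt k i = (PW.card : ℝ) * ((c : ℝ) + 2) := by
    rw [Finset.sum_congr rfl (fun i hi => ?_), Finset.sum_const, nsmul_eq_mul]
    rw [hPW, mem_filter] at hi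
    simp [wt, hi.2, hc]
  have hPLcard : PL.card ≤ 1 := by
    apply card_le_one.2
    intro i hi j hj
    by_contra hij
    rw [hPL, mem_filter] at hi hj
    have hd := hdisjB i hi.1 j hj.1 hij
    have h1 := Bdl_loser_mem hk i hi.2
    have h2 := Bdl_loser_mem hk j hj.2
    exact (Finset.disjoint_left.1 hd h1) h2
  have hPWsub : PW ⊆ Wn k ∩ S := by
    intro i hi
    rw [hPW, mem_filter, hP, mem_filter] at hi
    rw [mem_inter]
    exact ⟨by simp [Wn, hi.2], hi.1.1⟩
  have hcardWnS : (Wn k ∩ S).card + (Wn k \ S).card = k := by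
    rw [card_inter_add_card_sdiff, card_Wn hk]
  have hMidWn : Mid k \ S ⊆ Wn k \ S := sdiff_subset_sdiff (Mid_subset_Wn) (le_refl _)
  -- abbreviations
  set w := (Wn k \ S).card with hw
  set y := (Mid k \ S).card with hy
  have hyw : y ≤ w := card_le_card hMidWn
  have hwk : w ≤ k := by omega
  have hcpos : (0:ℝ) ≤ (c:ℝ) := by positivity
  rcases Finset.eq_empty_or_nonempty PL with hPLe | hPLne
  · -- no loser served
    have hpwk : PW.card + w ≤ k := by
      have := card_le_card hPWsub; omega
    have e1 : (PW.card : ℝ) + (w : ℝ) ≤ (k : ℝ) := by exact_mod_cast hpwk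
    have e2 : (y : ℝ) ≤ (w : ℝ) := by exact_mod_cast hyw
    rw [hsum, hsplit, hPWval, hPLe, Finset.sum_empty]
    have h0 := arith0 ((c:ℝ)) ((k:ℝ)) ((PW.card:ℝ)) ((w:ℝ)) ((y:ℝ)) e1 e2 hcpos
      (Nat.cast_nonneg _) (Nat.cast_nonneg _) (Nat.cast_nonneg _)
    constructor
    · linarith [h0.2]
    · linarith [h0.1]
  · -- exactly one loser served
    obtain ⟨ℓ, hℓeq⟩ := Finset.card_eq_one.1 (le_antisymm hPLcard (card_pos.2 hPLne))
    have hℓ : ℓ ∈ PL := by rw [hℓeq]; exact mem_singleton_self ℓ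
    rw [hPL, mem_filter] at hℓ
    obtain ⟨hℓP, hℓk⟩ := hℓ
    set t := (ℓ : ℕ) - k with htdef
    have hℓlt := ℓ.isLt
    have htL : t < LL k := by
      have : (ℓ : ℕ) < nn k := hℓlt
      unfold nn at this; omega
    have hctk : c + t < k := by
      have := cc_add_LL hk; omega
    -- the bundle of ℓ
    have hBℓ : Bdl k ℓ = univ.filter (fun x : Fin k => (x : ℕ) < c ∨ (x : ℕ) = c + t) := by
      simp [Bdl, hℓk, hc, htdef]
    -- winners served avoid TN
    have hPWTN : ∀ i ∈ PW, i ∉ TN k t := by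
      intro i hi hiTN
      rw [hPW, mem_filter] at hi
      have hik : (i : ℕ) < k := hi.2
      have hij : i ≠ ℓ := by
        intro h; rw [h] at hik; exact hℓk hik
      have hd := hdisjB i hi.1 ℓ hℓP hij
      have h1 : (⟨(i : ℕ), hik⟩ : Fin k) ∈ Bdl k i := Bdl_winner_mem i hik
      have h2 : (⟨(i : ℕ), hik⟩ : Fin k) ∈ Bdl k ℓ := by
        rw [hBℓ]
        simp only [mem_filter, mem_univ, true_and]
        simp only [TN, mem_filter, mem_univ, true_and] at hiTN
        exact hiTN
      exact (Finset.disjoint_left.1 hd h1) h2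
    have hPWsub2 : PW ⊆ (Wn k ∩ S) \ TN k t := by
      intro i hi
      rw [mem_sdiff]
      exact ⟨hPWsub hi, hPWTN i hi⟩
    set z := (TN k t ∩ S).card with hz
    have hinteq : (Wn k ∩ S) ∩ TN k t = TN k t ∩ S := by
      ext i
      simp only [mem_inter]
      constructor
      · rintro ⟨⟨_, h2⟩, h3⟩; exact ⟨h3, h2⟩
      · rintro ⟨h1, h2⟩; exact ⟨⟨TN_subset_Wn hk t htL h1, h2⟩, h1⟩
    have hcards : ((Wn k ∩ S) \ TN k t).card + z = (Wn k ∩ S).card := by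
      rw [hz, ← hinteq]; exact card_sdiff_add_card_inter _ _
    have hpw : PW.card + z + w ≤ k := by
      have := card_le_card hPWsub2; omega
    have hTNsplit : (TN k t \ S).card + z = c + 1 := by
      rw [hz, card_sdiff_add_card_inter, card_TN hk t htL]
    have hTNw : (TN k t \ S).card ≤ w := by
      exact card_le_card (sdiff_subset_sdiff (TN_subset_Wn hk t htL) (le_refl _))
    have hf2 : c + 1 ≤ w + z := by omega
    have hf3 : c + 1 + y ≤ w + z + 1 := by
      have hu : ((TN k t \ S) ∪ (Mid k \ S)).card ≤ w :=
        card_le_card (union_subset (sdiff_subset_sdiff (TN_subset_Wn hk t htL) (le_refl _)) hMidWn)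
      have hi : ((TN k t \ S) ∩ (Mid k \ S)).card ≤ 1 := by
        refine le_trans (card_le_card ?_) (card_TN_inter_Mid t)
        intro x hx
        rw [mem_inter] at hx ⊢
        exact ⟨(mem_sdiff.1 hx.1).1, (mem_sdiff.1 hx.2).1⟩
      have := card_union_add_card_inter (TN k t \ S) (Mid k \ S)
      omega
    -- value of the loser
    have hPLval : ∑ i ∈ PL, wt k i = ((c : ℝ) + 1) ^ 2 := by
      rw [hℓeq, Finset.sum_singleton]
      simp [wt, hℓk, hc]
    -- cast facts
    have e1 : (PW.card : ℝ) + (z : ℝ) + (w : ℝ) ≤ (k : ℝ) := by exact_mod_cast hpw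
    have e2 : (c : ℝ) + 1 ≤ (w : ℝ) + (z : ℝ) := by exact_mod_cast hf2
    have e3 : (c : ℝ) + 1 + (y : ℝ) ≤ (w : ℝ) + (z : ℝ) + 1 := by exact_mod_cast hf3
    have hz0 : (0:ℝ) ≤ (z : ℝ) := Nat.cast_nonneg _
    have hw0 : (0:ℝ) ≤ (w : ℝ) := Nat.cast_nonneg _
    have hy0 : (0:ℝ) ≤ (y : ℝ) := Nat.cast_nonneg _
    have hp0 : (0:ℝ) ≤ (PW.card : ℝ) := Nat.cast_nonneg _
    rw [hsum, hsplit, hPWval, hPLval]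
    constructor
    · exact arith1 _ _ _ _ _ e1 e2 hcpos hw0 hz0
    · rcases Nat.eq_zero_or_pos y with hy00 | hy1
      · have hy0' : (y : ℝ) = 0 := by rw [hy00]; simp
        rw [hy0']
        have := arith1 ((c:ℝ)) ((k:ℝ)) ((PW.card:ℝ)) ((w:ℝ)) ((z:ℝ)) e1 e2 hcpos hw0 hz0
        linarith
      · have hy1' : (1:ℝ) ≤ (y : ℝ) := by exact_mod_cast hy1
        have e3' : (c : ℝ) + (y : ℝ) ≤ (w : ℝ) + (z : ℝ) := by linarith
        exact arith2 _ _ _ _ _ _ e1 e2 e3' hy1' hcpos hw0 hz0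

end Master
section Alloc

variable {k : ℕ} (hk : 3 ≤ k)

def alloc1 : Fin (nn k) → Finset (Fin k) :=
  fun i => if (i : ℕ) < k then Bdl k i else ∅

def alloc2 (t : ℕ) : Fin (nn k) → Finset (Fin k) :=
  fun i => if ((i : ℕ) < k ∧ ¬ ((i : ℕ) < cc k ∨ (i : ℕ) = cc k + t)) ∨ (i : ℕ) = k + t
    then Bdl k i else ∅

include hk

omit hk in
lemma disj_winner_bdl {i j : Fin (nn k)} (hi : (i : ℕ) < k) (hj : (j : ℕ) < k) (hij : i ≠ j) :
    Disjoint (Bdl k i) (Bdl k j) := by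
  rw [Finset.disjoint_left]
  intro x hxi hxj
  simp only [Bdl, if_pos hi, if_pos hj, mem_filter, mem_univ, true_and] at hxi hxj
  exact hij (Fin.ext (by omega))

omit hk in
lemma alloc1_isAlloc (S : Finset (Fin (nn k))) : IsAlloc S (alloc1 (k := k)) := by
  intro i _ j _ hij
  unfold alloc1
  by_cases hi : (i : ℕ) < k
  · by_cases hj : (j : ℕ) < k
    · rw [if_pos hi, if_pos hj]; exact disj_winner_bdl hi hj hij
    · rw [if_neg hj]; exact disjoint_empty_right _
  · rw [if_neg hi]; exact disjoint_empty_left _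

lemma va_alloc1 (i : Fin (nn k)) :
    va k i (alloc1 i) = if (i : ℕ) < k then ((cc k : ℝ) + 2) else 0 := by
  unfold va alloc1
  by_cases hi : (i : ℕ) < k
  · rw [if_pos hi, if_pos hi, if_pos (Finset.Subset.refl _)]
    simp [wt, hi]
  · rw [if_neg hi, if_neg hi, if_neg]
    intro hsub
    exact absurd (hsub (Bdl_loser_mem hk i hi)) (by simp)

lemma sum_va_alloc1 (D : Finset (Fin (nn k))) :
    ∑ i ∈ D, va k i (alloc1 i)
      = ((Finset.filter (fun i : Fin (nn k) => (i : ℕ) < k) D).card : ℝ) * ((cc k : ℝ) + 2) := by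
  rw [Finset.sum_congr rfl (fun i _ => va_alloc1 hk i), ← Finset.sum_filter,
    Finset.sum_const, nsmul_eq_mul]

omit hk in
lemma coalW_le {S : Finset (Fin (nn k))} {B : ℝ} (hB : 0 ≤ B)
    (h : ∀ a : Fin (nn k) → Finset (Fin k), IsAlloc S a → ∑ i ∈ S, va k i (a i) ≤ B) :
    coalW (va k) S ≤ B := by
  apply Real.sSup_le _ hB
  rintro x ⟨a, ha, rfl⟩
  exact h a ha

lemma le_coalW {S : Finset (Fin (nn k))} {a : Fin (nn k) → Finset (Fin k)}
    (ha : IsAlloc S a) : ∑ i ∈ S, va k i (a i) ≤ coalW (va k) S := by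
  apply le_csSup
  · refine ⟨k * ((cc k : ℝ) + 2), ?_⟩
    rintro x ⟨b, hb, rfl⟩
    refine le_trans (master hk S b hb).1 ?_
    have : (0:ℝ) ≤ ((Wn k \ S).card : ℝ) := Nat.cast_nonneg _
    linarith
  · exact ⟨a, ha, rfl⟩

lemma coalW_univ : coalW (va k) (univ : Finset (Fin (nn k))) = k * ((cc k : ℝ) + 2) := by
  apply le_antisymm
  · apply coalW_le (by positivity)
    intro a ha
    refine le_trans (master hk univ a ha).1 ?_
    simp
  · refine le_trans ?_ (le_coalW hk (alloc1_isAlloc univ))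
    rw [sum_va_alloc1 hk]
    have : Finset.filter (fun i : Fin (nn k) => (i : ℕ) < k) univ = Wn k := rfl
    rw [this, card_Wn hk]

lemma coalW_compl_loser (ℓ : Fin (nn k)) (hℓ : ¬ (ℓ : ℕ) < k) :
    k * ((cc k : ℝ) + 2) ≤ coalW (va k) (univ \ {ℓ}) := by
  refine le_trans ?_ (le_coalW hk (alloc1_isAlloc _))
  rw [sum_va_alloc1 hk]
  have hfe : Finset.filter (fun i : Fin (nn k) => (i : ℕ) < k) (univ \ {ℓ}) = Wn k := by
    ext i
    simp only [mem_filter, mem_sdiff, mem_univ, true_and, mem_singleton, Wn]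
    constructor
    · rintro ⟨_, h⟩; exact h
    · intro h
      refine ⟨?_, h⟩
      rintro rfl; exact hℓ h
  rw [hfe, card_Wn hk]

lemma coalW_compl_winner (i : Fin (nn k)) (hi : (i : ℕ) < k) :
    coalW (va k) (univ \ {i}) ≤ k * ((cc k : ℝ) + 2) - 1 := by
  have hbound : (0:ℝ) ≤ k * ((cc k : ℝ) + 2) - 1 := by
    have : (3:ℝ) ≤ (k:ℝ) := by exact_mod_cast hk
    nlinarith [Nat.cast_nonneg (α := ℝ) (cc k)]
  apply coalW_le hbound
  intro a ha
  refine le_trans (master hk _ a ha).1 ?_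
  have : Wn k \ (univ \ {i}) = {i} := by
    ext j
    constructor
    · intro hj
      rw [mem_sdiff, mem_sdiff] at hj
      have := hj.2
      simpa using this
    · intro hj
      rw [mem_singleton] at hj
      subst hj
      refine mem_sdiff.2 ⟨by simp [Wn, hi], by simp⟩
  rw [this, card_singleton]
  norm_num

end Alloc
section Alloc2

variable {k : ℕ} (hk : 3 ≤ k)

include hk

lemma alloc2_isAlloc (t : ℕ) (ht : t < LL k) (S : Finset (Fin (nn k))) :
    IsAlloc S (alloc2 (k := k) t) := by
  have hctk : cc k + t < k := by
    have := cc_add_LL hk; omega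
  intro i _ j _ hij
  unfold alloc2
  by_cases hi : ((i : ℕ) < k ∧ ¬ ((i : ℕ) < cc k ∨ (i : ℕ) = cc k + t)) ∨ (i : ℕ) = k + t
  · by_cases hj : ((j : ℕ) < k ∧ ¬ ((j : ℕ) < cc k ∨ (j : ℕ) = cc k + t)) ∨ (j : ℕ) = k + t
    · rw [if_pos hi, if_pos hj]
      have hvij : (i : ℕ) ≠ (j : ℕ) := fun h => hij (Fin.ext h)
      rcases hi with ⟨hi1, hi2⟩ | hi3
      · rcases hj with ⟨hj1, hj2⟩ | hj3
        · exact disj_winner_bdl hi1 hj1 hij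
        · -- j is the loser
          rw [Finset.disjoint_left]
          intro x hxi hxj
          have hjk : ¬ (j : ℕ) < k := by omega
          simp only [Bdl, if_pos hi1, if_neg hjk, mem_filter, mem_univ, true_and] at hxi hxj
          rw [hxi] at hxj
          rw [hj3] at hxj
          simp only [Nat.add_sub_cancel_left] at hxj
          exact hi2 hxj
      · rcases hj with ⟨hj1, hj2⟩ | hj3
        · rw [Finset.disjoint_right]
          intro x hxj hxi
          have hik : ¬ (i : ℕ) < k := by omega
          simp only [Bdl, if_pos hj1, if_neg hik, mem_filter, mem_univ, true_and] at hxi hxj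
          rw [hxj] at hxi
          rw [hi3] at hxi
          simp only [Nat.add_sub_cancel_left] at hxi
          exact hj2 hxi
        · exact absurd (Fin.ext (hi3.trans hj3.symm) : i = j) hij
    · rw [if_neg hj]; exact disjoint_empty_right _
  · rw [if_neg hi]; exact disjoint_empty_left _

lemma sum_va_alloc2 (t : ℕ) (ht : t < LL k) :
    ∑ i ∈ (univ \ TN k t), va k i (alloc2 (k := k) t i)
      = ((k : ℝ) - ((cc k : ℝ) + 1)) * ((cc k : ℝ) + 2) + ((cc k : ℝ) + 1) ^ 2 := by
  have hctk : cc k + t < k := by have := cc_add_LL hk; omega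
  have hktnn : k + t < nn k := by unfold nn; omega
  set c := cc k with hc
  have hcongr : ∀ i ∈ (univ \ TN k t), va k i (alloc2 (k := k) t i)
      = if (i : ℕ) < k then ((c : ℝ) + 2) else (if (i : ℕ) = k + t then ((c : ℝ) + 1) ^ 2 else 0) := by
    intro i hi
    rw [mem_sdiff] at hi
    have hiTN : ¬ ((i : ℕ) < c ∨ (i : ℕ) = c + t) := by
      intro h
      exact hi.2 (by simpa [TN, hc] using h)
    by_cases hik : (i : ℕ) < k
    · have hcond : ((i : ℕ) < k ∧ ¬ ((i : ℕ) < c ∨ (i : ℕ) = c + t)) ∨ (i : ℕ) = k + t :=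
        Or.inl ⟨hik, hiTN⟩
      rw [if_pos hik]
      unfold va alloc2
      rw [if_pos hcond, if_pos (Finset.Subset.refl _)]
      simp [wt, hik, hc]
    · rw [if_neg hik]
      by_cases hikt : (i : ℕ) = k + t
      · have hcond : ((i : ℕ) < k ∧ ¬ ((i : ℕ) < c ∨ (i : ℕ) = c + t)) ∨ (i : ℕ) = k + t :=
          Or.inr hikt
        rw [if_pos hikt]
        unfold va alloc2
        rw [if_pos hcond, if_pos (Finset.Subset.refl _)]
        simp [wt, hik, hc]
      · have hcond : ¬ (((i : ℕ) < k ∧ ¬ ((i : ℕ) < c ∨ (i : ℕ) = c + t)) ∨ (i : ℕ) = k + t) := by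
          push_neg
          exact ⟨fun h => absurd h hik, hikt⟩
        rw [if_neg hikt]
        unfold va alloc2
        rw [if_neg hcond, if_neg]
        intro hsub
        exact absurd (hsub (Bdl_loser_mem hk i hik)) (by simp)
  rw [Finset.sum_congr rfl hcongr]
  rw [Finset.sum_ite, Finset.sum_const, nsmul_eq_mul]
  have hfw : Finset.filter (fun i : Fin (nn k) => (i : ℕ) < k) (univ \ TN k t)
      = Wn k \ TN k t := by
    ext i
    simp only [mem_filter, mem_sdiff, mem_univ, true_and, Wn]
    tauto
  have hcardfw : (Finset.filter (fun i : Fin (nn k) => (i : ℕ) < k) (univ \ TN k t)).card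
      = k - (c + 1) := by
    rw [hfw, card_sdiff_of_subset (TN_subset_Wn hk t ht), card_Wn hk, card_TN hk t ht]
  rw [hcardfw]
  have hsingle : Finset.filter (fun i : Fin (nn k) => ¬ (i : ℕ) < k) (univ \ TN k t)
      = Finset.filter (fun i : Fin (nn k) => ¬ (i : ℕ) < k) univ := by
    ext i
    simp only [mem_filter, mem_sdiff, mem_univ, true_and, TN, not_lt]
    constructor
    · rintro ⟨_, h⟩; exact h
    · intro h
      refine ⟨?_, h⟩
      push_neg
      omega
  rw [hsingle]
  have hpredeq : ∀ i : Fin (nn k), ((i : ℕ) = k + t) ↔ i = ⟨k + t, hktnn⟩ := by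
    intro i; rw [Fin.ext_iff]
  have hsum2 : ∑ i ∈ Finset.filter (fun i : Fin (nn k) => ¬ (i : ℕ) < k) univ,
      (if (i : ℕ) = k + t then ((c : ℝ) + 1) ^ 2 else 0) = ((c : ℝ) + 1) ^ 2 := by
    rw [Finset.sum_congr rfl (fun i _ => by rw [if_congr (hpredeq i) rfl rfl])]
    rw [Finset.sum_ite_eq']
    rw [if_pos]
    simp only [mem_filter, mem_univ, true_and]
    omega
  rw [hsum2]
  have hc1k : cc k + 1 ≤ k := cc_lt hk
  have : ((k - (c + 1) : ℕ) : ℝ) = (k : ℝ) - ((c : ℝ) + 1) := by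
    rw [hc]
    push_cast [Nat.cast_sub hc1k]
    ring
  rw [this]

end Alloc2
section Core

variable {k : ℕ} (hk : 3 ≤ k)

noncomputable def piB : Fin (nn k) → ℝ := fun i => if (i : ℕ) < k then 1 else 0
noncomputable def piM : Fin (nn k) → ℝ :=
  fun i => if cc k ≤ (i : ℕ) ∧ (i : ℕ) < k then (cc k : ℝ) + 1 else 0

omit hk in
lemma sum_piB (D : Finset (Fin (nn k))) :
    ∑ i ∈ D, piB (k := k) i
      = ((Finset.filter (fun i : Fin (nn k) => (i : ℕ) < k) D).card : ℝ) := by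
  unfold piB; rw [Finset.sum_boole]

omit hk in
lemma sum_piM (D : Finset (Fin (nn k))) :
    ∑ i ∈ D, piM (k := k) i
      = ((cc k : ℝ) + 1) *
        ((Finset.filter (fun i : Fin (nn k) => cc k ≤ (i : ℕ) ∧ (i : ℕ) < k) D).card : ℝ) := by
  unfold piM
  rw [← Finset.sum_filter, Finset.sum_const, nsmul_eq_mul, mul_comm]

omit hk in
lemma filter_sdiff_univ (p : Fin (nn k) → Prop) [DecidablePred p] (S : Finset (Fin (nn k))) :
    Finset.filter p (univ \ S) = Finset.filter p univ \ S := by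
  ext i; simp only [mem_filter, mem_sdiff, mem_univ, true_and]; tauto

include hk

lemma piB_core : piB (k := k) ∈ CorePoly (coalW (va k)) := by
  constructor
  · intro i; unfold piB; split <;> norm_num
  · intro S
    rw [sum_piB, filter_sdiff_univ]
    have hWn : Finset.filter (fun i : Fin (nn k) => (i : ℕ) < k) univ = Wn k := rfl
    rw [hWn, coalW_univ hk]
    have hcard : ((Wn k \ S).card : ℝ) ≤ (k : ℝ) := by
      have h1 : (Wn k \ S).card ≤ k := by
        have := card_le_card (sdiff_subset (s := Wn k) (t := S))
        rw [card_Wn hk] at this; exact this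
      exact_mod_cast h1
    have hB : (0:ℝ) ≤ k * ((cc k : ℝ) + 2) - ((Wn k \ S).card : ℝ) := by
      nlinarith [Nat.cast_nonneg (α := ℝ) (cc k), Nat.cast_nonneg (α := ℝ) k]
    have := coalW_le hB (fun a ha => (master hk S a ha).1)
    linarith

lemma piM_core : piM (k := k) ∈ CorePoly (coalW (va k)) := by
  constructor
  · intro i; unfold piM; split
    · positivity
    · exact le_refl 0
  · intro S
    rw [sum_piM, filter_sdiff_univ]
    have hMid : Finset.filter (fun i : Fin (nn k) => cc k ≤ (i : ℕ) ∧ (i : ℕ) < k) univ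
        = Mid k := rfl
    rw [hMid, coalW_univ hk]
    have hcard : ((Mid k \ S).card : ℝ) ≤ (k : ℝ) := by
      have h1 : (Mid k \ S).card ≤ k := by
        have h2 := card_le_card (sdiff_subset (s := Mid k) (t := S))
        rw [card_Mid hk] at h2
        have := cc_add_LL hk
        omega
      exact_mod_cast h1
    have hB : (0:ℝ) ≤ k * ((cc k : ℝ) + 2) - ((cc k : ℝ) + 1) * ((Mid k \ S).card : ℝ) := by
      nlinarith [Nat.cast_nonneg (α := ℝ) (cc k), Nat.cast_nonneg (α := ℝ) (Mid k \ S).card]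
    have := coalW_le hB (fun a ha => (master hk S a ha).2)
    linarith

lemma core_loser_zero {π : Fin (nn k) → ℝ} (hπ : π ∈ CorePoly (coalW (va k)))
    (ℓ : Fin (nn k)) (hℓ : ¬ (ℓ : ℕ) < k) : π ℓ = 0 := by
  obtain ⟨hpos, hcons⟩ := hπ
  have h1 := hcons (univ \ {ℓ})
  have h2 : univ \ (univ \ {ℓ}) = ({ℓ} : Finset (Fin (nn k))) := by
    rw [Finset.sdiff_sdiff_self_left, Finset.univ_inter]
  rw [h2, Finset.sum_singleton, coalW_univ hk] at h1
  have h3 := coalW_compl_loser hk ℓ hℓ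
  have h4 := hpos ℓ
  linarith

lemma core_TN_bound {π : Fin (nn k) → ℝ} (hπ : π ∈ CorePoly (coalW (va k)))
    (t : ℕ) (ht : t < LL k) : ∑ i ∈ TN k t, π i ≤ (cc k : ℝ) + 1 := by
  obtain ⟨hpos, hcons⟩ := hπ
  have h1 := hcons (univ \ TN k t)
  have h2 : univ \ (univ \ TN k t) = TN k t := by
    rw [Finset.sdiff_sdiff_self_left, Finset.univ_inter]
  rw [h2, coalW_univ hk] at h1
  have h3 := le_coalW hk (alloc2_isAlloc hk t ht (univ \ TN k t))
  rw [sum_va_alloc2 hk t ht] at h3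
  nlinarith [h1, h3]

lemma core_sum_le {π : Fin (nn k) → ℝ} (hπ : π ∈ CorePoly (coalW (va k))) :
    ∑ i, π i ≤ ((LL k : ℝ)) * ((cc k : ℝ) + 1) := by
  have hpos := hπ.1
  have h1 : ∑ i ∈ (Wn k), π i = ∑ i, π i :=
    Finset.sum_subset (subset_univ _)
      (fun i _ hi => core_loser_zero hk hπ i (by simpa [Wn] using hi))
  have hdisjCM : Disjoint (Cw k) (Mid k) := by
    rw [Finset.disjoint_left]
    intro i hi hi2
    simp only [Cw, Mid, mem_filter, mem_univ, true_and] at hi hi2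
    omega
  have hunion : Cw k ∪ Mid k = Wn k := by
    ext i
    simp only [Cw, Mid, Wn, mem_union, mem_filter, mem_univ, true_and]
    have := cc_lt hk
    omega
  have h2 : ∑ i ∈ Wn k, π i = ∑ i ∈ Cw k, π i + ∑ i ∈ Mid k, π i := by
    rw [← hunion, Finset.sum_union hdisjCM]
  -- bound the sum of the TN sums
  have h3 : ∑ t ∈ Finset.range (LL k), (∑ i ∈ TN k t, π i)
      ≤ (LL k : ℝ) * ((cc k : ℝ) + 1) := by
    refine le_trans (Finset.sum_le_card_nsmul _ _ ((cc k : ℝ) + 1)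
      (fun t ht => core_TN_bound hk hπ t (Finset.mem_range.1 ht))) ?_
    rw [Finset.card_range, nsmul_eq_mul]
  set CS := ∑ i ∈ Cw k, π i with hCS
  have hCS0 : 0 ≤ CS := Finset.sum_nonneg (fun i _ => hpos i)
  have hTNsplit : ∀ t ∈ Finset.range (LL k), (∑ i ∈ TN k t, π i)
      = (∑ i ∈ Finset.filter (fun i : Fin (nn k) => (i : ℕ) = cc k + t) univ, π i) + CS := by
    intro t ht
    rw [Finset.mem_range] at ht
    have hTNeq : TN k t
        = Finset.filter (fun i : Fin (nn k) => (i : ℕ) = cc k + t) univ ∪ Cw k := by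
      ext i
      simp only [TN, Cw, mem_union, mem_filter, mem_univ, true_and]
      tauto
    have hdisj2 : Disjoint (Finset.filter (fun i : Fin (nn k) => (i : ℕ) = cc k + t) univ)
        (Cw k) := by
      rw [Finset.disjoint_left]
      intro i hi hi2
      simp only [Cw, mem_filter, mem_univ, true_and] at hi hi2
      omega
    rw [hTNeq, Finset.sum_union hdisj2]
  have hbiU : Mid k = (Finset.range (LL k)).biUnion
      (fun t => Finset.filter (fun i : Fin (nn k) => (i : ℕ) = cc k + t) univ) := by
    ext i
    simp only [Mid, Finset.mem_biUnion, Finset.mem_range, mem_filter, mem_univ, true_and]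
    have := cc_add_LL hk
    constructor
    · intro h; exact ⟨(i : ℕ) - cc k, by omega, by omega⟩
    · rintro ⟨t, ht, heq⟩; omega
  have hdisjt : ∀ t1 ∈ Finset.range (LL k), ∀ t2 ∈ Finset.range (LL k), t1 ≠ t2 →
      Disjoint (Finset.filter (fun i : Fin (nn k) => (i : ℕ) = cc k + t1) univ)
        (Finset.filter (fun i : Fin (nn k) => (i : ℕ) = cc k + t2) univ) := by
    intro t1 _ t2 _ hne
    rw [Finset.disjoint_left]
    intro i hi hi2
    simp only [mem_filter, mem_univ, true_and] at hi hi2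
    omega
  have h6 : ∑ i ∈ Mid k, π i = ∑ t ∈ Finset.range (LL k),
      (∑ i ∈ Finset.filter (fun i : Fin (nn k) => (i : ℕ) = cc k + t) univ, π i) := by
    rw [hbiU]
    exact Finset.sum_biUnion hdisjt
  have h7 : ∑ t ∈ Finset.range (LL k), (∑ i ∈ TN k t, π i)
      = (∑ i ∈ Mid k, π i) + (LL k : ℝ) * CS := by
    rw [Finset.sum_congr rfl hTNsplit, Finset.sum_add_distrib, ← h6,
      Finset.sum_const, Finset.card_range, nsmul_eq_mul]
  have hL1 : (1:ℝ) ≤ (LL k : ℝ) := by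
    have := LL_ge hk; exact_mod_cast (by omega : 1 ≤ LL k)
  rw [← h1, h2]
  nlinarith [mul_nonneg (by linarith : (0:ℝ) ≤ (LL k : ℝ) - 1) hCS0]

end Core
section Leximin

variable {k : ℕ} (hk : 3 ≤ k)

omit hk in
lemma piB_count_zero :
    (univ.filter fun i : Fin (nn k) => piB (k := k) i = 0).card = LL k := by
  have hcong : (univ.filter fun i : Fin (nn k) => piB (k := k) i = 0)
      = univ.filter (fun i : Fin (nn k) => ¬ (i : ℕ) < k) := by
    apply Finset.filter_congr
    intro i _
    unfold piB
    split <;> simp_all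
  rw [hcong, card_filter_not_lt _ _ (k_le_nn (k := k))]
  unfold nn; omega

omit hk in
lemma piB_vals (j : Fin (nn k)) :
    sortVec (piB (k := k)) j = 0 ∨ sortVec (piB (k := k)) j = 1 := by
  unfold sortVec Function.comp
  by_cases h : ((Tuple.sort (piB (k := k)) j : Fin (nn k)) : ℕ) < k
  · right; simp [piB, h]
  · left; simp [piB, h]

omit hk in
lemma card_le_fin (j : Fin (nn k)) :
    (univ.filter fun j' : Fin (nn k) => (j' : ℕ) ≤ (j : ℕ)).card = (j : ℕ) + 1 := by
  have hcong : (univ.filter fun j' : Fin (nn k) => (j' : ℕ) ≤ (j : ℕ))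
      = univ.filter (fun j' : Fin (nn k) => (j' : ℕ) < (j : ℕ) + 1) := by
    apply Finset.filter_congr; intro i _; simp [Nat.lt_succ_iff]
  rw [hcong, card_filter_lt _ _ j.isLt]

lemma sortB_hi (j : Fin (nn k)) (hj : LL k ≤ (j : ℕ)) : sortVec (piB (k := k)) j = 1 := by
  rcases piB_vals j with h0 | h1
  · exfalso
    have hmono := sortVec_mono (piB (k := k))
    have hsub : (univ.filter fun j' : Fin (nn k) => (j' : ℕ) ≤ (j : ℕ))
        ⊆ univ.filter (fun j' : Fin (nn k) => sortVec (piB (k := k)) j' = 0) := by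
      intro j' hj'
      simp only [mem_filter, mem_univ, true_and] at hj' ⊢
      have hle : j' ≤ j := by rw [Fin.le_def]; exact hj'
      have h2 := hmono hle
      rw [h0] at h2
      rcases piB_vals j' with h | h
      · exact h
      · rw [h] at h2; norm_num at h2
    have hcards := card_le_card hsub
    rw [card_le_fin, sortVec_count (piB (k := k)) (fun r => r = 0), piB_count_zero] at hcards
    omega
  · exact h1

lemma sortB_lo (j : Fin (nn k)) (hj : (j : ℕ) < LL k) : sortVec (piB (k := k)) j = 0 := by
  rcases piB_vals j with h0 | h1
  · exact h0
  · exfalso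
    have hmono := sortVec_mono (piB (k := k))
    have hsub : (univ.filter fun j' : Fin (nn k) => sortVec (piB (k := k)) j' = 0)
        ⊆ univ.filter (fun j' : Fin (nn k) => (j' : ℕ) < (j : ℕ)) := by
      intro j' hj'
      simp only [mem_filter, mem_univ, true_and] at hj' ⊢
      by_contra hc
      have hle : j ≤ j' := by rw [Fin.le_def]; omega
      have h2 := hmono hle
      rw [h1, hj'] at h2
      norm_num at h2
    have hcards := card_le_card hsub
    rw [card_filter_lt _ _ (le_of_lt j.isLt),
      sortVec_count (piB (k := k)) (fun r => r = 0), piB_count_zero] at hcards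
    omega

include hk

lemma piB_leximin (π' : Fin (nn k) → ℝ) (hπ' : π' ∈ CorePoly (coalW (va k))) :
    ¬ LexDom π' (piB (k := k)) := by
  rintro ⟨κ, hpre, hlt⟩
  have hpos := hπ'.1
  rcases lt_or_ge (κ : ℕ) (LL k) with hκ | hκ
  · -- some position below the loser block exceeds 0
    rw [sortB_lo κ hκ] at hlt
    have hmono := sortVec_mono π'
    have hsub : (univ.filter fun j : Fin (nn k) => sortVec π' j = 0)
        ⊆ univ.filter (fun j : Fin (nn k) => (j : ℕ) < (κ : ℕ)) := by
      intro j hj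
      simp only [mem_filter, mem_univ, true_and] at hj ⊢
      by_contra hc
      have hle : κ ≤ j := by rw [Fin.le_def]; omega
      have h2 := hmono hle
      rw [hj] at h2
      linarith
    have hcards := card_le_card hsub
    rw [card_filter_lt _ _ (le_of_lt κ.isLt),
      sortVec_count π' (fun r => r = 0)] at hcards
    have hlosers : (univ.filter fun i : Fin (nn k) => ¬ (i : ℕ) < k)
        ⊆ univ.filter (fun i : Fin (nn k) => π' i = 0) := by
      intro i hi
      simp only [mem_filter, mem_univ, true_and] at hi ⊢
      exact core_loser_zero hk hπ' i hi
    have hc2 := card_le_card hlosers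
    rw [card_filter_not_lt _ _ (k_le_nn (k := k))] at hc2
    have : nn k - k = LL k := by unfold nn; omega
    rw [this] at hc2
    omega
  · rw [sortB_hi (k := k) κ hκ] at hlt
    have hmono := sortVec_mono π'
    -- every position from LL k on has value at least 1
    have hge1 : ∀ j : Fin (nn k), LL k ≤ (j : ℕ) → 1 ≤ sortVec π' j := by
      intro j hj
      rcases lt_or_ge j κ with hjκ | hjκ
      · rw [hpre j hjκ, sortB_hi (k := k) j hj]
      · have := hmono hjκ
        linarith
    have hsub : (univ.filter fun j : Fin (nn k) => LL k ≤ (j : ℕ))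
        ⊆ univ.filter (fun j : Fin (nn k) => 1 ≤ sortVec π' j) := by
      intro j hj
      simp only [mem_filter, mem_univ, true_and] at hj ⊢
      exact hge1 j hj
    have hcards := card_le_card hsub
    have hLLnn : LL k ≤ nn k := by unfold nn; omega
    have hcong : (univ.filter fun j : Fin (nn k) => LL k ≤ (j : ℕ))
        = univ.filter (fun j : Fin (nn k) => ¬ (j : ℕ) < LL k) := by
      apply Finset.filter_congr; intro i _; simp
    rw [hcong, card_filter_not_lt _ _ hLLnn,
      sortVec_count π' (fun r => 1 ≤ r)] at hcards
    have hnnLL : nn k - LL k = k := by unfold nn; omega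
    rw [hnnLL] at hcards
    -- hence every winner has value at least 1
    have hAsub : (univ.filter fun i : Fin (nn k) => 1 ≤ π' i) ⊆ Wn k := by
      intro i hi
      simp only [mem_filter, mem_univ, true_and, Wn] at hi ⊢
      by_contra hc
      have := core_loser_zero hk hπ' i hc
      rw [this] at hi
      norm_num at hi
    have hAeq : (univ.filter fun i : Fin (nn k) => 1 ≤ π' i) = Wn k := by
      apply Finset.eq_of_subset_of_card_le hAsub
      rw [card_Wn hk]; exact hcards
    have hallwin : ∀ i : Fin (nn k), (i : ℕ) < k → 1 ≤ π' i := by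
      intro i hi
      have : i ∈ Wn k := by simp [Wn, hi]
      rw [← hAeq, mem_filter] at this
      exact this.2
    -- the strictly larger coordinate
    set i0 := Tuple.sort π' κ with hi0def
    have hsκ : sortVec π' κ = π' i0 := rfl
    have hi0 : 1 < π' i0 := by rw [← hsκ]; exact hlt
    have hi0k : (i0 : ℕ) < k := by
      by_contra hc
      have := core_loser_zero hk hπ' i0 hc
      rw [this] at hi0
      norm_num at hi0
    set t0 := if (i0 : ℕ) < cc k then 0 else (i0 : ℕ) - cc k with ht0def
    have hccLL := cc_add_LL hk
    have ht0L : t0 < LL k := by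
      rw [ht0def]
      split
      · have := LL_ge hk; omega
      · omega
    have hi0TN : i0 ∈ TN k t0 := by
      simp only [TN, mem_filter, mem_univ, true_and]
      rw [ht0def]
      by_cases hc : (i0 : ℕ) < cc k
      · rw [if_pos hc]; left; exact hc
      · rw [if_neg hc]; right; omega
    have hTNsum := core_TN_bound hk hπ' t0 ht0L
    have hsumsplit := Finset.add_sum_erase (TN k t0) π' hi0TN
    have herasebound : (cc k : ℝ) ≤ ∑ x ∈ (TN k t0).erase i0, π' x := by
      have hb := Finset.card_nsmul_le_sum ((TN k t0).erase i0) π' 1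
        (fun x hx => hallwin x (by
          have hxTN := Finset.mem_of_mem_erase hx
          have := TN_subset_Wn hk t0 ht0L hxTN
          simpa [Wn] using this))
      rw [Finset.card_erase_of_mem hi0TN, card_TN hk t0 ht0L] at hb
      simpa using hb
    linarith [hsumsplit, hTNsum, herasebound, hi0]

end Leximin
section Final

variable {k : ℕ} (hk : 3 ≤ k)

include hk

lemma va_empty (i : Fin (nn k)) : va k i ∅ = 0 := by
  unfold va
  rw [if_neg]
  intro hsub
  by_cases hik : (i : ℕ) < k
  · exact absurd (hsub (Bdl_winner_mem i hik)) (by simp)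
  · exact absurd (hsub (Bdl_loser_mem hk i hik)) (by simp)

omit hk in
lemma va_nonneg (i : Fin (nn k)) (A : Finset (Fin k)) : 0 ≤ va k i A := by
  unfold va wt
  split
  · split <;> positivity
  · exact le_refl 0

lemma winners_eq : winners (va k) = Wn k := by
  ext i
  unfold winners
  rw [Finset.mem_filter]
  simp only [Finset.mem_univ, true_and]
  unfold Wn
  rw [Finset.mem_filter]
  simp only [Finset.mem_univ, true_and]
  constructor
  · intro hlt
    by_contra hik
    have h1 := coalW_compl_loser hk i hik
    rw [coalW_univ hk] at hlt
    linarith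
  · intro hik
    rw [coalW_univ hk]
    have h2 := coalW_compl_winner hk i hik
    linarith

lemma sum_piB_univ : ∑ i, piB (k := k) i = (k : ℝ) := by
  rw [sum_piB univ]
  have : Finset.filter (fun i : Fin (nn k) => (i : ℕ) < k) univ = Wn k := rfl
  rw [this, card_Wn hk]

lemma sum_piM_univ : ∑ i, piM (k := k) i = ((cc k : ℝ) + 1) * (LL k : ℝ) := by
  rw [sum_piM univ]
  have : Finset.filter (fun i : Fin (nn k) => cc k ≤ (i : ℕ) ∧ (i : ℕ) < k) univ = Mid k := rfl
  rw [this, card_Mid hk]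

lemma denom_eq :
    (k : ℝ) ^ 2 + 2 * (k : ℝ) + ((k % 2 : ℕ) : ℝ)
      = 4 * (((cc k : ℝ) + 1) * (LL k : ℝ)) := by
  rcases Nat.mod_two_eq_zero_or_one k with h | h
  · have h2 : k = 2 * (k / 2) := by omega
    have hL : LL k = k / 2 := by unfold LL; omega
    have e1 : ((k % 2 : ℕ) : ℝ) = 0 := by rw [h]; norm_num
    have e2 : ((LL k : ℕ) : ℝ) = ((k / 2 : ℕ) : ℝ) := by rw [hL]
    have e3 : ((cc k : ℕ) : ℝ) = ((k / 2 : ℕ) : ℝ) := rfl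
    have e4 : (k : ℝ) = 2 * ((k / 2 : ℕ) : ℝ) := by exact_mod_cast h2
    rw [e1, e2, e3, e4]
    ring
  · have h2 : k = 2 * (k / 2) + 1 := by omega
    have hL : LL k = k / 2 + 1 := by unfold LL; omega
    have e1 : ((k % 2 : ℕ) : ℝ) = 1 := by rw [h]; norm_num
    have e2 : ((LL k : ℕ) : ℝ) = ((k / 2 : ℕ) : ℝ) + 1 := by rw [hL]; push_cast; ring
    have e3 : ((cc k : ℕ) : ℝ) = ((k / 2 : ℕ) : ℝ) := rfl
    have e4 : (k : ℝ) = 2 * ((k / 2 : ℕ) : ℝ) + 1 := by exact_mod_cast h2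
    rw [e1, e2, e3, e4]
    ring

lemma piM_sum_pos : 0 < ((cc k : ℝ) + 1) * (LL k : ℝ) := by
  have h1 : (0:ℝ) ≤ (cc k : ℝ) := Nat.cast_nonneg _
  have h2 : (2:ℝ) ≤ (LL k : ℝ) := by exact_mod_cast LL_ge hk
  nlinarith

end Final
end BLO
/-- Tightness of the total-utility bound for the BLO outcome. -/
theorem blo_total_utility_bound_tight (k : ℕ) (hk : 3 ≤ k) :
    ∃ (n m : ℕ) (v : Fin n → Finset (Fin m) → ℝ),
      (∀ i, v i ∅ = 0) ∧ (∀ i S, 0 ≤ v i S) ∧ (winners v).card = k ∧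
      ∃ πB πM : Fin n → ℝ,
        (πB ∈ CorePoly (coalW v) ∧ ∀ π' ∈ CorePoly (coalW v), ¬ LexDom π' πB) ∧
        (πM ∈ CorePoly (coalW v) ∧ ∀ π' ∈ CorePoly (coalW v), ∑ i, π' i ≤ ∑ i, πM i) ∧
        (∑ i, πB i) = (4 * (k : ℝ)) / ((k : ℝ) ^ 2 + 2 * (k : ℝ) + ((k % 2 : ℕ) : ℝ)) * ∑ i, πM i ∧
        0 < ∑ i, πM i := by
  refine ⟨BLO.nn k, k, BLO.va k, BLO.va_empty hk, BLO.va_nonneg, ?_, BLO.piB (k := k),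
    BLO.piM (k := k), ⟨BLO.piB_core hk, fun π' hπ' => BLO.piB_leximin hk π' hπ'⟩,
    ⟨BLO.piM_core hk, fun π' hπ' => ?_⟩, ?_, ?_⟩
  · rw [BLO.winners_eq hk, BLO.card_Wn hk]
  · rw [BLO.sum_piM_univ hk]
    have h := BLO.core_sum_le hk hπ'
    linarith [h]
  · rw [BLO.sum_piB_univ hk, BLO.sum_piM_univ hk, BLO.denom_eq hk]
    have hpos := BLO.piM_sum_pos hk
    have hL0 : (BLO.LL k : ℝ) ≠ 0 := Nat.cast_ne_zero.2 (by have := BLO.LL_ge hk; omega)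
    field_simp
  · rw [BLO.sum_piM_univ hk]
    exact BLO.piM_sum_pos hk
end

section
/- The relative ratio 1/(|W|−1) for Pareto-optimal core outcomes is tight: for every integer k ≥ 2 there exists a combinatorial auction with winner set W of size k and a Pareto-optimal element π of its core U such that ∑_{i∈N} π_i = (1/(k−1)) · max_{π'∈U} ∑_{i∈N} π'_i and max_{π'∈U} ∑_{i∈N} π'_i > 0. -/
namespace TightCA

variable {k : ℕ}

/-- Required bundle of bidder `i`. -/
def Rset (k : ℕ) (i : Fin (2*k-1)) : Finset (Fin k) :=
  if h : (i : ℕ) < k then {⟨i, h⟩}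
  else if h2 : 0 < k ∧ (i : ℕ) - k + 1 < k then {⟨0, h2.1⟩, ⟨(i : ℕ) - k + 1, h2.2⟩}
  else ∅

/-- The valuation: 1 iff the bundle contains the required bundle. -/
def vv (k : ℕ) : Fin (2*k-1) → Finset (Fin k) → ℝ :=
  fun i S => if Rset k i ⊆ S then 1 else 0

lemma loser_cond (hk : 2 ≤ k) (i : Fin (2*k-1)) (h : ¬ (i:ℕ) < k) :
    0 < k ∧ (i:ℕ) - k + 1 < k := by
  have := i.isLt; omega

lemma Rset_loser (hk : 2 ≤ k) (i : Fin (2*k-1)) (h : ¬ (i:ℕ) < k) :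
    Rset k i = {⟨0, (loser_cond hk i h).1⟩, ⟨(i:ℕ) - k + 1, (loser_cond hk i h).2⟩} := by
  rw [Rset, dif_neg h, dif_pos (loser_cond hk i h)]

lemma Rset_nonempty (hk : 2 ≤ k) (i : Fin (2*k-1)) : (Rset k i).Nonempty := by
  by_cases h : (i:ℕ) < k
  · rw [Rset, dif_pos h]; exact ⟨_, Finset.mem_singleton_self _⟩
  · rw [Rset_loser hk i h]; exact ⟨_, Finset.mem_insert_self _ _⟩

lemma vv_empty (hk : 2 ≤ k) (i : Fin (2*k-1)) : vv k i ∅ = 0 := by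
  rw [vv, if_neg]
  intro hsub
  obtain ⟨x, hx⟩ := Rset_nonempty hk i
  simpa using hsub hx

lemma vv_nonneg (i : Fin (2*k-1)) (S : Finset (Fin k)) : 0 ≤ vv k i S := by
  rw [vv]; split <;> norm_num

lemma vv_le_one (i : Fin (2*k-1)) (S : Finset (Fin k)) : vv k i S ≤ 1 := by
  rw [vv]; split <;> norm_num

lemma sum_vv (S : Finset (Fin (2*k-1))) (a : Fin (2*k-1) → Finset (Fin k)) :
    ∑ i ∈ S, vv k i (a i) = ((S.filter (fun i => Rset k i ⊆ a i)).card : ℝ) := by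
  rw [← Finset.sum_boole]
  rfl

end TightCA
namespace TightCA

variable {k : ℕ}

/-- The "regular winners" predicate: bidders 1..k-1. -/
def Qp (k : ℕ) (i : Fin (2*k-1)) : Prop := 1 ≤ (i:ℕ) ∧ (i:ℕ) < k

instance : DecidablePred (Qp k) := fun _ => instDecidableAnd

/-- Bidder 0. -/
def i0 (hk : 2 ≤ k) : Fin (2*k-1) := ⟨0, by omega⟩

lemma zero_mem_Rset (hk : 2 ≤ k) (i : Fin (2*k-1)) (h : ¬ Qp k i) :
    (⟨0, by omega⟩ : Fin k) ∈ Rset k i := by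
  by_cases hik : (i:ℕ) < k
  · have h0 : (i:ℕ) = 0 := by
      rcases Nat.eq_zero_or_pos (i:ℕ) with h' | h'
      · exact h'
      · exact absurd ⟨h', hik⟩ h
    rw [Rset, dif_pos hik]
    simp [Fin.ext_iff, h0]
  · rw [Rset_loser hk i hik]
    exact Finset.mem_insert_self _ _

/-- Lemma A: at most one positive bidder outside the regular winners. -/
lemma cardA (hk : 2 ≤ k) (S : Finset (Fin (2*k-1))) (a : Fin (2*k-1) → Finset (Fin k))
    (ha : IsAlloc S a) :
    (S.filter (fun i => Rset k i ⊆ a i)).card ≤ 1 + (S.filter (Qp k)).card := by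
  classical
  set T := S.filter (fun i => Rset k i ⊆ a i) with hT
  have hsplit := Finset.card_filter_add_card_filter_not (s := T) (Qp k)
  have h1 : (T.filter (fun i => ¬ Qp k i)).card ≤ 1 := by
    refine Finset.card_le_one.mpr ?_
    intro i hi j hj
    simp only [hT, Finset.mem_filter] at hi hj
    by_contra hne
    have hd := ha i hi.1.1 j hj.1.1 hne
    exact Finset.disjoint_left.mp hd (hi.1.2 (zero_mem_Rset hk i hi.2))
      (hj.1.2 (zero_mem_Rset hk j hj.2))
  have h2 : (T.filter (Qp k)).card ≤ (S.filter (Qp k)).card :=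
    Finset.card_le_card (Finset.filter_subset_filter _ (Finset.filter_subset _ _))
  omega

/-- The item used by bidder `i`. -/
def itm (hk : 2 ≤ k) (i : Fin (2*k-1)) : Fin k :=
  if h : (i:ℕ) < k then ⟨i, h⟩ else ⟨(i:ℕ) - k + 1, (loser_cond hk i h).2⟩

lemma itm_mem (hk : 2 ≤ k) (i : Fin (2*k-1)) : itm hk i ∈ Rset k i := by
  by_cases h : (i:ℕ) < k
  · rw [Rset, dif_pos h, itm, dif_pos h]; exact Finset.mem_singleton_self _
  · rw [Rset_loser hk i h, itm, dif_neg h]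
    exact Finset.mem_insert_of_mem (Finset.mem_singleton_self _)

lemma itm_pos (hk : 2 ≤ k) (i : Fin (2*k-1)) (h : (i:ℕ) ≠ 0) : 1 ≤ (itm hk i : ℕ) := by
  rw [itm]
  split
  · simpa using Nat.one_le_iff_ne_zero.mpr h
  · simp only []
    omega

/-- Generic counting helper via `attachFin`. -/
lemma card_filter_val {N : ℕ} (p : Fin N → Prop) [DecidablePred p] (s : Finset ℕ)
    (hs : ∀ x ∈ s, x < N) (hp : ∀ i : Fin N, p i ↔ (i:ℕ) ∈ s) :
    (Finset.univ.filter p).card = s.card := by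
  rw [← Finset.card_attachFin s hs]
  congr 1
  ext i
  simp [Finset.mem_attachFin, hp]

lemma count_winners (hk : 2 ≤ k) :
    (Finset.univ.filter (fun i : Fin (2*k-1) => (i:ℕ) < k)).card = k := by
  rw [card_filter_val _ (Finset.range k) (fun x hx => by simp only [Finset.mem_range] at hx; omega)
    (fun i => by simp)]
  simp

lemma count_Q (hk : 2 ≤ k) :
    (Finset.univ.filter (Qp k)).card = k - 1 := by
  rw [card_filter_val _ (Finset.Ico 1 k) (fun x hx => by simp only [Finset.mem_Ico] at hx; omega)
    (fun i => by simp [Qp])]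
  simp

lemma count_pos_fink (hk : 2 ≤ k) :
    (Finset.univ.filter (fun x : Fin k => 1 ≤ (x:ℕ))).card = k - 1 := by
  rw [card_filter_val _ (Finset.Ico 1 k) (fun x hx => by simp only [Finset.mem_Ico] at hx; omega)
    (fun i => by simp [Finset.mem_Ico, i.isLt])]
  simp

/-- Lemma B: without bidder 0, at most `k-1` positive bidders. -/
lemma cardB (hk : 2 ≤ k) (S : Finset (Fin (2*k-1))) (hS : i0 hk ∉ S)
    (a : Fin (2*k-1) → Finset (Fin k)) (ha : IsAlloc S a) :
    (S.filter (fun i => Rset k i ⊆ a i)).card ≤ k - 1 := by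
  classical
  rw [← count_pos_fink hk]
  refine Finset.card_le_card_of_injOn (itm hk) ?_ ?_
  · intro i hi
    simp only [Finset.mem_coe, Finset.mem_filter] at hi ⊢
    refine ⟨Finset.mem_univ _, ?_⟩
    apply itm_pos hk
    intro h0
    apply hS
    have : i = i0 hk := by
      apply Fin.ext
      simpa [i0] using h0
    rw [this] at hi
    exact hi.1
  · intro i hi j hj hij
    simp only [Finset.coe_filter, Set.mem_setOf_eq] at hi hj
    by_contra hne
    have hd := ha i hi.1 j hj.1 hne
    have h1 : itm hk i ∈ a i := hi.2 (itm_mem hk i)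
    have h2 : itm hk i ∈ a j := by rw [hij]; exact hj.2 (itm_mem hk j)
    exact Finset.disjoint_left.mp hd h1 h2

end TightCA
namespace TightCA

variable {k : ℕ}

lemma isAlloc_of_univ {a : Fin (2*k-1) → Finset (Fin k)} (S : Finset (Fin (2*k-1)))
    (h : IsAlloc Finset.univ a) : IsAlloc S a :=
  fun i _ j _ hij => h i (Finset.mem_univ i) j (Finset.mem_univ j) hij

lemma bdd (S : Finset (Fin (2*k-1))) :
    BddAbove (Set.image (fun a : Fin (2*k-1) → Finset (Fin k) => ∑ i ∈ S, vv k i (a i))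
      {a | IsAlloc S a}) := by
  refine ⟨(S.card : ℝ), ?_⟩
  rintro x ⟨a, -, rfl⟩
  calc ∑ i ∈ S, vv k i (a i) ≤ ∑ _i ∈ S, 1 :=
        Finset.sum_le_sum (fun i _ => vv_le_one i (a i))
    _ = S.card := by simp

lemma le_coalW (S : Finset (Fin (2*k-1))) (a : Fin (2*k-1) → Finset (Fin k))
    (ha : IsAlloc S a) : ∑ i ∈ S, vv k i (a i) ≤ coalW (vv k) S :=
  le_csSup (bdd S) ⟨a, ha, rfl⟩

lemma coalW_le (S : Finset (Fin (2*k-1))) {c : ℝ} (hc : 0 ≤ c)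
    (h : ∀ a, IsAlloc S a → ∑ i ∈ S, vv k i (a i) ≤ c) : coalW (vv k) S ≤ c := by
  apply Real.sSup_le _ hc
  rintro x ⟨a, ha, rfl⟩
  exact h a ha

/-- Upper bound A at the coalW level. -/
lemma wA (hk : 2 ≤ k) (S : Finset (Fin (2*k-1))) :
    coalW (vv k) S ≤ 1 + ((S.filter (Qp k)).card : ℝ) := by
  refine coalW_le S (by positivity) ?_
  intro a ha
  rw [sum_vv]
  exact_mod_cast Nat.cast_le.mpr (cardA hk S a ha)

lemma wS_le_k (hk : 2 ≤ k) (S : Finset (Fin (2*k-1))) : coalW (vv k) S ≤ (k:ℝ) := by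
  have h1 := wA hk S
  have h2 : (S.filter (Qp k)).card ≤ k - 1 := by
    rw [← count_Q (k := k) hk]
    exact Finset.card_le_card (Finset.filter_subset_filter _ (Finset.subset_univ S))
  have h3 : ((S.filter (Qp k)).card : ℝ) ≤ (k:ℝ) - 1 := by
    calc ((S.filter (Qp k)).card : ℝ) ≤ ((k-1 : ℕ) : ℝ) := Nat.cast_le.mpr h2
      _ = (k:ℝ) - 1 := by rw [Nat.cast_sub (by omega)]; norm_num
  linarith

/-- Upper bound B at the coalW level. -/
lemma wB (hk : 2 ≤ k) (S : Finset (Fin (2*k-1))) (hS : i0 hk ∉ S) :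
    coalW (vv k) S ≤ (k:ℝ) - 1 := by
  have hk1 : (2:ℝ) ≤ (k:ℝ) := by exact_mod_cast hk
  refine coalW_le S (by linarith) ?_
  intro a ha
  rw [sum_vv]
  calc ((S.filter (fun i => Rset k i ⊆ a i)).card : ℝ) ≤ ((k-1 : ℕ) : ℝ) :=
        Nat.cast_le.mpr (cardB hk S hS a ha)
    _ = (k:ℝ) - 1 := by rw [Nat.cast_sub (by omega)]; norm_num

/-- The grand allocation. -/
def a0 (k : ℕ) : Fin (2*k-1) → Finset (Fin k) := fun i => if (i:ℕ) < k then Rset k i else ∅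

lemma disj_Rset_winners (i j : Fin (2*k-1)) (hi : (i:ℕ) < k) (hj : (j:ℕ) < k) (hij : i ≠ j) :
    Disjoint (Rset k i) (Rset k j) := by
  rw [Rset, dif_pos hi, Rset, dif_pos hj]
  simp only [Finset.disjoint_singleton, ne_eq, Fin.mk.injEq]
  intro h
  exact hij (Fin.ext h)

lemma alloc_a0 : IsAlloc (Finset.univ : Finset (Fin (2*k-1))) (a0 k) := by
  intro i _ j _ hij
  rw [a0]
  by_cases hi : (i:ℕ) < k
  · by_cases hj : (j:ℕ) < k
    · simpa [a0, hi, hj] using disj_Rset_winners i j hi hj hij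
    · simp [a0, hi, hj]
  · simp [a0, hi]

lemma sum_a0 (hk : 2 ≤ k) (S : Finset (Fin (2*k-1))) :
    ∑ i ∈ S, vv k i (a0 k i) = ((S.filter (fun i : Fin (2*k-1) => (i:ℕ) < k)).card : ℝ) := by
  rw [sum_vv]
  congr 2
  apply Finset.filter_congr
  intro i _
  by_cases h : (i:ℕ) < k
  · simp [a0, h]
  · simp only [a0, if_neg h, h, iff_false]
    intro hsub
    obtain ⟨x, hx⟩ := Rset_nonempty hk i
    simpa using hsub hx

lemma wUniv_ge (hk : 2 ≤ k) : (k:ℝ) ≤ coalW (vv k) Finset.univ := by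
  have h := le_coalW Finset.univ (a0 k) alloc_a0
  rwa [sum_a0 hk, count_winners hk] at h

lemma wUniv (hk : 2 ≤ k) : coalW (vv k) Finset.univ = (k:ℝ) :=
  le_antisymm (wS_le_k hk _) (wUniv_ge hk)

lemma w_without_loser (hk : 2 ≤ k) (b : Fin (2*k-1)) (hb : k ≤ (b:ℕ)) :
    (k:ℝ) ≤ coalW (vv k) (Finset.univ \ {b}) := by
  have h := le_coalW (Finset.univ \ {b}) (a0 k) (isAlloc_of_univ _ alloc_a0)
  rw [sum_a0 hk] at h
  have heq : (Finset.univ \ {b}).filter (fun i : Fin (2*k-1) => (i:ℕ) < k)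
      = Finset.univ.filter (fun i : Fin (2*k-1) => (i:ℕ) < k) := by
    ext i
    simp only [Finset.mem_filter, Finset.mem_sdiff, Finset.mem_univ, true_and,
      Finset.mem_singleton, Fin.ext_iff]
    omega
  rwa [heq, count_winners hk] at h

lemma w_without_winner (hk : 2 ≤ k) (i : Fin (2*k-1)) (hi : (i:ℕ) < k) :
    coalW (vv k) (Finset.univ \ {i}) ≤ (k:ℝ) - 1 := by
  by_cases h0 : (i:ℕ) = 0
  · apply wB hk
    simp only [Finset.mem_sdiff, Finset.mem_univ, true_and, Finset.mem_singleton, i0]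
    intro hcon
    apply hcon
    apply Fin.ext
    simp [h0]
  · have h := wA hk (Finset.univ \ {i})
    have heq : (Finset.univ \ {i}).filter (Qp k) = (Finset.univ.filter (Qp k)).erase i := by
      ext j
      simp only [Finset.mem_filter, Finset.mem_sdiff, Finset.mem_univ, true_and,
        Finset.mem_singleton, Finset.mem_erase, ne_eq]
      try tauto
    have hiQ : i ∈ Finset.univ.filter (Qp k) := by
      simp only [Finset.mem_filter, Finset.mem_univ, true_and, Qp]
      omega
    have hcard : ((Finset.univ \ {i}).filter (Qp k)).card = k - 2 := by
      rw [heq, Finset.card_erase_of_mem hiQ, count_Q hk]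
      omega
    rw [hcard] at h
    have : ((k - 2 : ℕ) : ℝ) = (k:ℝ) - 2 := by
      rw [Nat.cast_sub (by omega)]; norm_num
    rw [this] at h
    linarith

end TightCA
namespace TightCA

variable {k : ℕ}

/-- Allocation witnessing `w(N \ {0, wi}) ≥ k-1`: regular winners except `wi` get their
items, and the loser paired with `wi` gets `{0, wi}`. -/
def a1 (k t : ℕ) : Fin (2*k-1) → Finset (Fin k) :=
  fun j => if ((j:ℕ) < k ∧ (j:ℕ) ≠ 0 ∧ (j:ℕ) ≠ t) ∨ (j:ℕ) = k + t - 1 then Rset k j else ∅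

lemma disj_winner_loser (hk : 2 ≤ k) (i j : Fin (2*k-1)) (hi : (i:ℕ) < k) (hj : ¬ (j:ℕ) < k)
    (h1 : (i:ℕ) ≠ 0) (h2 : (i:ℕ) ≠ (j:ℕ) - k + 1) : Disjoint (Rset k i) (Rset k j) := by
  rw [Rset, dif_pos hi, Rset_loser hk j hj, Finset.disjoint_singleton_left]
  simp only [Finset.mem_insert, Finset.mem_singleton, Fin.ext_iff]
  push_neg
  exact ⟨h1, h2⟩

lemma alloc_a1 (hk : 2 ≤ k) (t : ℕ) (ht : 1 ≤ t) (htk : t < k) :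
    IsAlloc (Finset.univ : Finset (Fin (2*k-1))) (a1 k t) := by
  intro i _ j _ hij
  simp only [a1]
  by_cases hi : ((i:ℕ) < k ∧ (i:ℕ) ≠ 0 ∧ (i:ℕ) ≠ t) ∨ (i:ℕ) = k + t - 1
  · by_cases hj : ((j:ℕ) < k ∧ (j:ℕ) ≠ 0 ∧ (j:ℕ) ≠ t) ∨ (j:ℕ) = k + t - 1
    · rw [if_pos hi, if_pos hj]
      rcases hi with hi | hi
      · rcases hj with hj | hj
        · exact disj_Rset_winners i j hi.1 hj.1 hij
        · exact disj_winner_loser hk i j hi.1 (by omega) hi.2.1 (by omega)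
      · rcases hj with hj | hj
        · exact (disj_winner_loser hk j i hj.1 (by omega) hj.2.1 (by omega)).symm
        · exact absurd (Fin.ext (hi.trans hj.symm)) hij
    · rw [if_neg hj]
      exact Finset.disjoint_empty_right _
  · rw [if_neg hi]
    exact Finset.disjoint_empty_left _

lemma sum_a1 (hk : 2 ≤ k) (t : ℕ) (S : Finset (Fin (2*k-1))) :
    ∑ j ∈ S, vv k j (a1 k t j) =
      ((S.filter (fun j : Fin (2*k-1) =>
        ((j:ℕ) < k ∧ (j:ℕ) ≠ 0 ∧ (j:ℕ) ≠ t) ∨ (j:ℕ) = k + t - 1)).card : ℝ) := by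
  rw [sum_vv]
  congr 2
  apply Finset.filter_congr
  intro j _
  by_cases h : ((j:ℕ) < k ∧ (j:ℕ) ≠ 0 ∧ (j:ℕ) ≠ t) ∨ (j:ℕ) = k + t - 1
  · simp [a1, h]
  · simp only [a1, if_neg h, h, iff_false]
    intro hsub
    obtain ⟨x, hx⟩ := Rset_nonempty hk j
    simpa using hsub hx

lemma count_a1 (hk : 2 ≤ k) (t : ℕ) (ht : 1 ≤ t) (htk : t < k) :
    (Finset.univ.filter (fun j : Fin (2*k-1) =>
        ((j:ℕ) < k ∧ (j:ℕ) ≠ 0 ∧ (j:ℕ) ≠ t) ∨ (j:ℕ) = k + t - 1)).card = k - 1 := by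
  rw [card_filter_val _ (insert (k+t-1) ((Finset.Ico 1 k).erase t))
    (fun x hx => by
      simp only [Finset.mem_insert, Finset.mem_erase, Finset.mem_Ico] at hx
      omega)
    (fun j => by
      simp only [Finset.mem_insert, Finset.mem_erase, Finset.mem_Ico]
      omega)]
  rw [Finset.card_insert_of_notMem (by
    simp only [Finset.mem_erase, Finset.mem_Ico]
    omega)]
  rw [Finset.card_erase_of_mem (by simp only [Finset.mem_Ico]; omega)]
  rw [Nat.card_Ico]
  omega

lemma w_pair (hk : 2 ≤ k) (wi : Fin (2*k-1)) (hq : Qp k wi) :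
    (k:ℝ) - 1 ≤ coalW (vv k) (Finset.univ \ {i0 hk, wi}) := by
  obtain ⟨ht, htk⟩ := hq
  have h := le_coalW (Finset.univ \ {i0 hk, wi}) (a1 k (wi:ℕ))
    (isAlloc_of_univ _ (alloc_a1 hk _ ht htk))
  rw [sum_a1 hk] at h
  have heq : (Finset.univ \ {i0 hk, wi}).filter (fun j : Fin (2*k-1) =>
        ((j:ℕ) < k ∧ (j:ℕ) ≠ 0 ∧ (j:ℕ) ≠ (wi:ℕ)) ∨ (j:ℕ) = k + (wi:ℕ) - 1)
      = Finset.univ.filter (fun j : Fin (2*k-1) =>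
        ((j:ℕ) < k ∧ (j:ℕ) ≠ 0 ∧ (j:ℕ) ≠ (wi:ℕ)) ∨ (j:ℕ) = k + (wi:ℕ) - 1) := by
    ext j
    simp only [Finset.mem_filter, Finset.mem_sdiff, Finset.mem_univ, true_and,
      Finset.mem_insert, Finset.mem_singleton, Fin.ext_iff, i0, not_or]
    omega
  rw [heq, count_a1 hk _ ht htk] at h
  calc (k:ℝ) - 1 = ((k - 1 : ℕ) : ℝ) := by rw [Nat.cast_sub (by omega)]; norm_num
    _ ≤ _ := h

lemma winners_eq (hk : 2 ≤ k) :
    winners (vv k) = Finset.univ.filter (fun i : Fin (2*k-1) => (i:ℕ) < k) := by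
  ext i
  rw [winners]
  simp only [Finset.mem_filter, Finset.mem_univ, true_and]
  constructor
  · intro h
    by_contra hik
    have h1 := w_without_loser hk i (by omega)
    have h2 := wS_le_k hk (Finset.univ : Finset (Fin (2*k-1)))
    linarith
  · intro hik
    have h1 := w_without_winner hk i hik
    have h2 := wUniv_ge hk
    linarith

lemma winners_card (hk : 2 ≤ k) : (winners (vv k)).card = k := by
  rw [winners_eq hk, count_winners hk]

/-- The Pareto optimal core point: bidder 0 gets 1. -/
def piv (hk : 2 ≤ k) : Fin (2*k-1) → ℝ := fun i => if i = i0 hk then 1 else 0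

/-- The total-utility maximizing core point: each regular winner gets 1. -/
def pimax (k : ℕ) : Fin (2*k-1) → ℝ := fun i => if Qp k i then 1 else 0

lemma sum_piv (hk : 2 ≤ k) (S : Finset (Fin (2*k-1))) :
    ∑ i ∈ S, piv hk i = if i0 hk ∈ S then 1 else 0 := by
  simp only [piv]
  exact Finset.sum_ite_eq' S (i0 hk) (fun _ => (1:ℝ))

lemma piv_mem (hk : 2 ≤ k) : piv hk ∈ CorePoly (coalW (vv k)) := by
  constructor
  · intro i
    simp only [piv]
    split <;> norm_num
  · intro S
    rw [wUniv hk, sum_piv hk]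
    by_cases h : i0 hk ∈ S
    · rw [if_neg (by simp [h])]
      have := wS_le_k hk S
      linarith
    · rw [if_pos (by simp [h])]
      have := wB hk S h
      linarith

lemma split_Q (hk : 2 ≤ k) (S : Finset (Fin (2*k-1))) :
    (S.filter (Qp k)).card + ((Finset.univ \ S).filter (Qp k)).card = k - 1 := by
  rw [← count_Q (k := k) hk, ← Finset.card_union_of_disjoint
    (Finset.disjoint_filter_filter Finset.disjoint_sdiff), ← Finset.filter_union,
    Finset.union_sdiff_of_subset (Finset.subset_univ S)]

lemma sum_pimax (S : Finset (Fin (2*k-1))) :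
    ∑ i ∈ S, pimax k i = ((S.filter (Qp k)).card : ℝ) := by
  simp only [pimax]
  rw [Finset.sum_boole]

lemma pimax_mem (hk : 2 ≤ k) : pimax k ∈ CorePoly (coalW (vv k)) := by
  constructor
  · intro i
    simp only [pimax]
    split <;> norm_num
  · intro S
    rw [wUniv hk, sum_pimax]
    have h1 := wA hk S
    have h2 := split_Q hk S
    have h3 : ((S.filter (Qp k)).card : ℝ) + (((Finset.univ \ S).filter (Qp k)).card : ℝ)
        = (k:ℝ) - 1 := by
      have := congrArg (fun x : ℕ => (x:ℝ)) h2
      push_cast at this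
      rw [this, Nat.cast_sub (by omega)]
      norm_num
    linarith

end TightCA
namespace TightCA

variable {k : ℕ}

lemma core_loser_zero (hk : 2 ≤ k) {π' : Fin (2*k-1) → ℝ} (hc : π' ∈ CorePoly (coalW (vv k)))
    (b : Fin (2*k-1)) (hb : k ≤ (b:ℕ)) : π' b = 0 := by
  obtain ⟨hpos, hcons⟩ := hc
  have h1 := hcons (Finset.univ \ {b})
  rw [Finset.sdiff_sdiff_eq_self (Finset.subset_univ _), Finset.sum_singleton, wUniv hk] at h1
  have h2 := w_without_loser hk b hb
  have h3 := hpos b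
  linarith

lemma core_pair (hk : 2 ≤ k) {π' : Fin (2*k-1) → ℝ} (hc : π' ∈ CorePoly (coalW (vv k)))
    (i : Fin (2*k-1)) (hq : Qp k i) : π' (i0 hk) + π' i ≤ 1 := by
  obtain ⟨hpos, hcons⟩ := hc
  have h1 := hcons (Finset.univ \ {i0 hk, i})
  rw [Finset.sdiff_sdiff_eq_self (Finset.subset_univ _)] at h1
  have hne : i0 hk ≠ i := by
    intro h
    have h' : ((i0 hk : Fin (2*k-1)) : ℕ) = (i:ℕ) := by rw [h]
    obtain ⟨hq1, hq2⟩ := hq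
    simp only [i0] at h'
    omega
  rw [Finset.sum_pair hne, wUniv hk] at h1
  have h2 := w_pair hk i hq
  linarith

lemma core_total_le (hk : 2 ≤ k) {π' : Fin (2*k-1) → ℝ} (hc : π' ∈ CorePoly (coalW (vv k))) :
    ∑ i, π' i ≤ (k:ℝ) - 1 := by
  classical
  have hpos := hc.1
  have hrest : ∑ i ∈ Finset.univ.filter (fun i : Fin (2*k-1) => ¬ Qp k i), π' i
      = π' (i0 hk) := by
    have heq : Finset.univ.filter (fun i : Fin (2*k-1) => ¬ Qp k i)
        = insert (i0 hk) (Finset.univ.filter (fun i : Fin (2*k-1) => k ≤ (i:ℕ))) := by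
      ext i
      simp only [Finset.mem_filter, Finset.mem_univ, true_and, Finset.mem_insert, Qp, i0,
        Fin.ext_iff, not_and, not_lt]
      omega
    rw [heq, Finset.sum_insert (by
      simp only [Finset.mem_filter, Finset.mem_univ, true_and, i0, not_le]
      omega)]
    rw [Finset.sum_eq_zero, add_zero]
    intro b hb
    simp only [Finset.mem_filter] at hb
    exact core_loser_zero hk hc b hb.2
  have hQ : ∑ i ∈ Finset.univ.filter (Qp k), π' i ≤ ((k:ℝ) - 1) * (1 - π' (i0 hk)) := by
    calc ∑ i ∈ Finset.univ.filter (Qp k), π' i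
        ≤ ∑ _i ∈ Finset.univ.filter (Qp k), (1 - π' (i0 hk)) := by
          apply Finset.sum_le_sum
          intro i hi
          simp only [Finset.mem_filter] at hi
          have := core_pair hk hc i hi.2
          linarith
      _ = ((Finset.univ.filter (Qp k)).card : ℝ) * (1 - π' (i0 hk)) := by
          rw [Finset.sum_const, nsmul_eq_mul]
      _ = ((k:ℝ) - 1) * (1 - π' (i0 hk)) := by
          rw [count_Q hk, Nat.cast_sub (by omega)]
          norm_num
  have hsplit := Finset.sum_filter_add_sum_filter_not Finset.univ (Qp k) π'
  have hk2 : (2:ℝ) ≤ (k:ℝ) := by exact_mod_cast hk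
  have h0 := hpos (i0 hk)
  nlinarith [mul_nonneg (by linarith : (0:ℝ) ≤ (k:ℝ) - 2) h0]

end TightCA

/-- Tightness of the 1/(|W|-1) ratio for Pareto-optimal core outcomes. -/
theorem pareto_total_utility_bound_tight (k : ℕ) (hk : 2 ≤ k) :
    ∃ (n m : ℕ) (v : Fin n → Finset (Fin m) → ℝ),
      (∀ i, v i ∅ = 0) ∧ (∀ i S, 0 ≤ v i S) ∧ (winners v).card = k ∧
      ∃ π : Fin n → ℝ,
        π ∈ CorePoly (coalW v) ∧
        (¬ ∃ π' ∈ CorePoly (coalW v), (∀ i, π i ≤ π' i) ∧ ∃ j, π j < π' j) ∧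
        (∑ i, π i) = (1 / ((k : ℝ) - 1)) *
          sSup (Set.image (fun π' : Fin n → ℝ => ∑ i, π' i) (CorePoly (coalW v))) ∧
        0 < sSup (Set.image (fun π' : Fin n → ℝ => ∑ i, π' i) (CorePoly (coalW v))) := by
  classical
  open TightCA in
  have hk2 : (2:ℝ) ≤ (k:ℝ) := by exact_mod_cast hk
  have hsup : sSup (Set.image (fun π' : Fin (2*k-1) → ℝ => ∑ i, π' i)
      (CorePoly (coalW (vv k)))) = (k:ℝ) - 1 := by
    apply le_antisymm
    · apply Real.sSup_le
      · rintro x ⟨π', hπ', rfl⟩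
        exact core_total_le hk hπ'
      · linarith
    · apply le_csSup
      · refine ⟨(k:ℝ) - 1, ?_⟩
        rintro x ⟨π', hπ', rfl⟩
        exact core_total_le hk hπ'
      · refine ⟨pimax k, pimax_mem hk, ?_⟩
        show (∑ i, pimax k i) = (k:ℝ) - 1
        rw [sum_pimax, count_Q hk, Nat.cast_sub (by omega)]
        norm_num
  refine ⟨2*k-1, k, vv k, fun i => vv_empty hk i, fun i S => vv_nonneg i S,
    winners_card hk, piv hk, piv_mem hk, ?_, ?_, ?_⟩
  · rintro ⟨π', hc, hge, j, hlt⟩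
    have h1le : (1:ℝ) ≤ π' (i0 hk) := by
      have hle := hge (i0 hk)
      simpa [piv] using hle
    have hwit : Qp k (⟨1, by omega⟩ : Fin (2*k-1)) := ⟨by simp, by simpa using by omega⟩
    have hall : ∀ i, π' i = piv hk i := by
      intro i
      by_cases hi0 : i = i0 hk
      · subst hi0
        have h2 := core_pair hk hc ⟨1, by omega⟩ hwit
        have h3 := hc.1 (⟨1, by omega⟩ : Fin (2*k-1))
        have hone : piv hk (i0 hk) = 1 := by simp [piv]
        rw [hone]
        linarith
      · by_cases hq : Qp k i
        · have h2 := core_pair hk hc i hq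
          have h3 := hc.1 i
          simp only [piv, if_neg hi0]
          linarith
        · have hb : k ≤ (i:ℕ) := by
            simp only [Qp, not_and, not_lt] at hq
            have hne0 : (i:ℕ) ≠ 0 := by
              intro h
              exact hi0 (Fin.ext (by simp [i0, h]))
            omega
          rw [core_loser_zero hk hc i hb]
          simp [piv, hi0]
    rw [hall j] at hlt
    exact lt_irrefl _ hlt
  · rw [hsup, sum_piv hk, if_pos (Finset.mem_univ _)]
    have hne : (k:ℝ) - 1 ≠ 0 := by linarith
    rw [one_div, inv_mul_cancel₀ hne]
  · rw [hsup]
    linarith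
end
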